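/- arXiv:0706.3816 — 5 statements merged into one kernel-verified Lean document; each statement's English description precedes it below -/
import Mathlib

section
/- Let f(z) = Σ_{n≥0} c_n z^n be holomorphic on D_R with f(D_R) ⊆ G, where G ⊆ ℂ is a domain with convex hull G̃ ≠ ℂ. Then for every q > 0, every integer m ≥ 1, and every z with |z| = r < R, (Σ_{n=m}^∞ |c_n z^n|^q)^{1/q} ≤ (2 r^m) / (R^{m-1} (R^q - r^q)^{1/q}) · dist(c_0, ∂G̃). -/
open Complex Metric Real MeasureTheory

lemma intExpI (n : ℤ) :
    (∫ θ in Set.Ioc (0:ℝ) (2*π), Complex.exp (n * θ * I)) = if n = 0 then ((2*π:ℝ):ℂ) else 0 := by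
  have h2π : (0:ℝ) ≤ 2*π := by positivity
  rw [← intervalIntegral.integral_of_le h2π]
  rcases eq_or_ne n 0 with rfl | hn
  · simp
  · simp only [hn, if_false]
    have : ∀ θ : ℝ, (n:ℂ) * θ * I = (n * I) * θ := by intro θ; ring
    simp_rw [this]
    rw [integral_exp_mul_complex (by simp [hn, Complex.I_ne_zero])]
    have : (n:ℂ) * I * ((2*π:ℝ):ℂ) = n * (2*(π:ℂ)*I) := by push_cast; ring
    rw [this, Complex.exp_int_mul_two_pi_mul_I]
    simp

lemma summable_aux {R ρ : ℝ} (hρ : 0 ≤ ρ) (hρR : ρ < R) {b : ℕ → ℂ} {h : ℂ → ℂ}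
    (hsum : ∀ w ∈ ball (0:ℂ) R, HasSum (fun k => b k * w ^ k) (h w)) :
    Summable (fun k => ‖b k‖ * ρ^k) := by
  set ρ' : ℝ := (ρ + R)/2 with hρ'
  have hρρ' : ρ < ρ' := by simp [hρ']; linarith
  have hρ'R : ρ' < R := by simp [hρ']; linarith
  have hρ'0 : 0 < ρ' := lt_of_le_of_lt hρ hρρ'
  have hw : (ρ' : ℂ) ∈ ball (0:ℂ) R := by
    simp only [mem_ball, dist_zero_right, Complex.norm_real, Real.norm_eq_abs, _root_.abs_of_nonneg hρ'0.le]; exact hρ'R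
  have hs := (hsum _ hw).summable
  have hb : BddAbove (Set.range fun k => ‖b k * (ρ':ℂ) ^ k‖) :=
    (hs.tendsto_atTop_zero.norm.bddAbove_range)
  obtain ⟨M, hM⟩ := hb
  have hM' : ∀ k, ‖b k‖ * ρ'^k ≤ M := by
    intro k
    have := hM (Set.mem_range_self k)
    simpa [norm_mul, norm_pow, Complex.norm_real, Real.norm_eq_abs, _root_.abs_of_nonneg hρ'0.le] using this
  have hgeo : Summable (fun k : ℕ => M * (ρ/ρ')^k) :=
    (summable_geometric_of_lt_one (by positivity) (by rw [div_lt_one hρ'0]; exact hρρ')).mul_left M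
  apply Summable.of_nonneg_of_le (fun k => by positivity) _ hgeo
  intro k
  have : ‖b k‖ * ρ^k = (‖b k‖ * ρ'^k) * (ρ/ρ')^k := by
    have hρ'ne : ρ' ≠ 0 := hρ'0.ne'
    field_simp
    rw [mul_assoc _ (ρ'^k), ← mul_pow, mul_div_assoc', mul_div_cancel_left₀ ρ hρ'ne]
  rw [this]
  exact mul_le_mul_of_nonneg_right (hM' k) (by positivity)
lemma circle_swap {R ρ : ℝ} (hρ : 0 < ρ) (hρR : ρ < R) {b : ℕ → ℂ} {h : ℂ → ℂ}
    (hsum : ∀ w ∈ ball (0:ℂ) R, HasSum (fun k => b k * w ^ k) (h w)) (s : ℤ) :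
    HasSum (fun k : ℕ => if (k:ℤ) + s = 0 then b k * (ρ:ℂ)^k * (2*π) else 0)
      (∫ θ in Set.Ioc (0:ℝ) (2*π), h (ρ * Complex.exp (θ * I)) * Complex.exp (s * θ * I)) := by
  set μ := volume.restrict (Set.Ioc (0:ℝ) (2*π)) with hμ
  set F : ℕ → ℝ → ℂ := fun k θ => b k * (ρ:ℂ)^k * Complex.exp ((((k:ℤ)+s : ℤ) : ℂ) * θ * I) with hF
  have hFcont : ∀ k, Continuous (F k) := by
    intro k
    apply Continuous.mul continuous_const
    apply Complex.continuous_exp.comp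
    exact (continuous_const.mul Complex.continuous_ofReal).mul continuous_const
  have hFint : ∀ k, Integrable (F k) μ := fun k => (hFcont k).integrableOn_Ioc
  have hmem : ∀ θ : ℝ, (ρ:ℂ) * Complex.exp (θ * I) ∈ ball (0:ℂ) R := by
    intro θ
    simp only [mem_ball, dist_zero_right, norm_mul, Complex.norm_real, Real.norm_eq_abs,
      _root_.abs_of_nonneg hρ.le, Complex.norm_exp_ofReal_mul_I, mul_one]
    exact hρR
  have hFnorm : ∀ k θ, ‖F k θ‖ = ‖b k‖ * ρ^k := by
    intro k θ
    have : ((((k:ℤ)+s : ℤ)):ℂ) * θ * I = (((((k:ℤ)+s : ℤ) : ℝ) * θ : ℝ) : ℂ) * I := by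
      push_cast; ring
    simp only [hF, norm_mul, this, Complex.norm_exp_ofReal_mul_I, mul_one, norm_pow,
      Complex.norm_real, Real.norm_eq_abs, _root_.abs_of_nonneg hρ.le]
  have hFsumnorm : Summable fun k => ∫ θ, ‖F k θ‖ ∂μ := by
    have : ∀ k, (∫ θ, ‖F k θ‖ ∂μ) = (2*π) * (‖b k‖ * ρ^k) := by
      intro k
      simp_rw [hFnorm k]
      rw [hμ, setIntegral_const, Real.volume_real_Ioc_of_le (by positivity), smul_eq_mul]
      ring_nf
    rw [funext this]
    exact ((summable_aux hρ.le hρR hsum).mul_left _)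
  have hkey := MeasureTheory.hasSum_integral_of_summable_integral_norm hFint hFsumnorm
  have htsum : ∀ θ : ℝ, (∑' k, F k θ) = h ((ρ:ℂ) * Complex.exp (θ * I)) * Complex.exp (s * θ * I) := by
    intro θ
    have hs := (hsum _ (hmem θ)).mul_right (Complex.exp (s * θ * I))
    have : (fun k => b k * ((ρ:ℂ) * Complex.exp (θ * I)) ^ k * Complex.exp (s * θ * I)) = fun k => F k θ := by
      funext k
      simp only [hF]
      have he : Complex.exp (θ * I) ^ k * Complex.exp (s * θ * I)
          = Complex.exp ((((k:ℤ)+s : ℤ) : ℂ) * θ * I) := by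
        rw [← Complex.exp_nat_mul, ← Complex.exp_add]
        congr 1
        push_cast
        ring
      rw [mul_pow, ← he]
      ring
    rw [this] at hs
    exact hs.tsum_eq
  have hint : ∀ k, (∫ θ, F k θ ∂μ) = if (k:ℤ) + s = 0 then b k * (ρ:ℂ)^k * (2*π) else 0 := by
    intro k
    simp only [hF]
    rw [hμ, MeasureTheory.integral_const_mul, intExpI ((k:ℤ)+s)]
    split <;> simp
  rw [funext hint] at hkey
  have : (∫ θ, (∑' k, F k θ) ∂μ) = ∫ θ in Set.Ioc (0:ℝ) (2*π), h ((ρ:ℂ) * Complex.exp (θ * I)) * Complex.exp (s * θ * I) := by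
    exact integral_congr_ae (Filter.Eventually.of_forall (fun θ => htsum θ))
  rwa [this] at hkey
lemma circle_coeff {R ρ : ℝ} (hρ : 0 < ρ) (hρR : ρ < R) {b : ℕ → ℂ} {h : ℂ → ℂ}
    (hsum : ∀ w ∈ ball (0:ℂ) R, HasSum (fun k => b k * w ^ k) (h w)) (n : ℕ) :
    (∫ θ in Set.Ioc (0:ℝ) (2*π), h (ρ * Complex.exp (θ * I)) * Complex.exp ((-(n:ℤ) : ℤ) * θ * I))
      = b n * (ρ:ℂ)^n * (2*π) := by
  have hk := circle_swap hρ hρR hsum (-(n:ℤ))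
  have h2 : HasSum (fun k : ℕ => if k = n then b n * (ρ:ℂ)^n * (2*π) else 0)
      (b n * (ρ:ℂ)^n * (2*π)) := hasSum_ite_eq n _
  have : (fun k : ℕ => if (k:ℤ) + (-(n:ℤ)) = 0 then b k * (ρ:ℂ)^k * (2*π) else 0)
      = fun k : ℕ => if k = n then b n * (ρ:ℂ)^n * (2*π) else 0 := by
    funext k
    by_cases hkn : k = n
    · subst hkn; simp
    · have : (k:ℤ) + (-(n:ℤ)) ≠ 0 := by omega
      simp [hkn, this]
  rw [this] at hk
  exact hk.unique h2

lemma circle_zero {R ρ : ℝ} (hρ : 0 < ρ) (hρR : ρ < R) {b : ℕ → ℂ} {h : ℂ → ℂ}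
    (hsum : ∀ w ∈ ball (0:ℂ) R, HasSum (fun k => b k * w ^ k) (h w)) (n : ℕ) (hn : 1 ≤ n) :
    (∫ θ in Set.Ioc (0:ℝ) (2*π), h (ρ * Complex.exp (θ * I)) * Complex.exp (((n:ℤ) : ℤ) * θ * I))
      = 0 := by
  have hk := circle_swap hρ hρR hsum (n:ℤ)
  have : (fun k : ℕ => if (k:ℤ) + (n:ℤ) = 0 then b k * (ρ:ℂ)^k * (2*π) else 0)
      = fun _ : ℕ => (0:ℂ) := by
    funext k
    have : (k:ℤ) + (n:ℤ) ≠ 0 := by omega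
    simp [this]
  rw [this] at hk
  exact hk.unique hasSum_zero

set_option maxHeartbeats 1000000 in
lemma cara {R : ℝ} (hR : 0 < R) {b : ℕ → ℂ} {h : ℂ → ℂ}
    (hcont : ContinuousOn h (ball 0 R))
    (hsum : ∀ w ∈ ball (0:ℂ) R, HasSum (fun k => b k * w ^ k) (h w))
    (hpos : ∀ w ∈ ball (0:ℂ) R, 0 ≤ (h w).re)
    {n : ℕ} (hn : 1 ≤ n) : ‖b n‖ * R ^ n ≤ 2 * (b 0).re := by
  have key : ∀ ρ ∈ Set.Ioo (0:ℝ) R, ‖b n‖ * ρ ^ n ≤ 2 * (b 0).re := by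
    rintro ρ ⟨hρ0, hρR⟩
    have hmem : ∀ θ : ℝ, (ρ:ℂ) * Complex.exp (θ * I) ∈ ball (0:ℂ) R := by
      intro θ
      simp only [mem_ball, dist_zero_right, norm_mul, Complex.norm_real, Real.norm_eq_abs,
        _root_.abs_of_nonneg hρ0.le, Complex.norm_exp_ofReal_mul_I, mul_one]
      exact hρR
    have hgc : Continuous (fun θ : ℝ => h ((ρ:ℂ) * Complex.exp (θ * I))) := by
      apply hcont.comp_continuous
      · exact continuous_const.mul (Complex.continuous_exp.comp
          (Complex.continuous_ofReal.mul continuous_const))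
      · exact hmem
    have hE : ∀ s : ℂ, Continuous (fun θ : ℝ => Complex.exp (s * θ * I)) := by
      intro s
      exact Complex.continuous_exp.comp
        ((continuous_const.mul Complex.continuous_ofReal).mul continuous_const)
    have hA := circle_coeff hρ0 hρR hsum n
    have hA0 := circle_coeff hρ0 hρR hsum 0
    have hB := circle_zero hρ0 hρR hsum n hn
    push_cast at hA hA0 hB
    simp only [Nat.cast_zero, neg_zero, zero_mul, Complex.exp_zero, mul_one, pow_zero] at hA0
    -- hA0 : ∫ θ in Ioc, h (ρ * cexp (θ I)) = b 0 * (2 * π)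
    have hconjB : (∫ θ in Set.Ioc (0:ℝ) (2*π),
        (starRingEnd ℂ) (h ((ρ:ℂ) * Complex.exp (θ * I))) * Complex.exp (-(n:ℂ) * θ * I)) = 0 := by
      have hc : ∀ θ : ℝ,
          (starRingEnd ℂ) (h ((ρ:ℂ) * Complex.exp (θ * I)) * Complex.exp ((n:ℂ) * θ * I))
          = (starRingEnd ℂ) (h ((ρ:ℂ) * Complex.exp (θ * I))) * Complex.exp (-(n:ℂ) * θ * I) := by
        intro θ
        rw [map_mul, ← Complex.exp_conj]
        congr 1
        simp only [map_mul, Complex.conj_I, Complex.conj_ofReal, map_natCast]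
        ring
      rw [← integral_congr_ae (Filter.Eventually.of_forall (fun θ => hc θ)), integral_conj, hB,
        map_zero]
    have hint1 : IntegrableOn
        (fun θ : ℝ => h ((ρ:ℂ) * Complex.exp (θ * I)) * Complex.exp (-(n:ℂ) * θ * I))
        (Set.Ioc (0:ℝ) (2*π)) volume := (hgc.mul (hE (-(n:ℂ)))).integrableOn_Ioc
    have hint2 : IntegrableOn
        (fun θ : ℝ => (starRingEnd ℂ) (h ((ρ:ℂ) * Complex.exp (θ * I)))
          * Complex.exp (-(n:ℂ) * θ * I)) (Set.Ioc (0:ℝ) (2*π)) volume :=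
      ((Complex.continuous_conj.comp hgc).mul (hE (-(n:ℂ)))).integrableOn_Ioc
    have hsplit : (∫ θ in Set.Ioc (0:ℝ) (2*π),
        (h ((ρ:ℂ) * Complex.exp (θ * I)) + (starRingEnd ℂ) (h ((ρ:ℂ) * Complex.exp (θ * I))))
          * Complex.exp (-(n:ℂ) * θ * I)) = b n * (ρ:ℂ)^n * (2*π) := by
      have heq : ∀ θ : ℝ,
          (h ((ρ:ℂ) * Complex.exp (θ * I)) + (starRingEnd ℂ) (h ((ρ:ℂ) * Complex.exp (θ * I))))
            * Complex.exp (-(n:ℂ) * θ * I)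
          = h ((ρ:ℂ) * Complex.exp (θ * I)) * Complex.exp (-(n:ℂ) * θ * I)
            + (starRingEnd ℂ) (h ((ρ:ℂ) * Complex.exp (θ * I)))
              * Complex.exp (-(n:ℂ) * θ * I) := fun θ => by ring
      rw [integral_congr_ae (Filter.Eventually.of_forall heq), integral_add hint1 hint2,
        hconjB, add_zero]
      exact hA
    have hnorm_eq : ∀ θ : ℝ,
        ‖(h ((ρ:ℂ) * Complex.exp (θ * I)) + (starRingEnd ℂ) (h ((ρ:ℂ) * Complex.exp (θ * I))))
          * Complex.exp (-(n:ℂ) * θ * I)‖ = 2 * (h ((ρ:ℂ) * Complex.exp (θ * I))).re := by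
      intro θ
      have h1 : (-(n:ℂ)) * θ * I = (((-(n:ℝ)) * θ : ℝ) : ℂ) * I := by push_cast; ring
      rw [norm_mul, h1, Complex.norm_exp_ofReal_mul_I, mul_one, Complex.add_conj]
      simp only [Complex.norm_real, Real.norm_eq_abs]
      rw [_root_.abs_of_nonneg]
      have := hpos _ (hmem θ)
      positivity
    have hgint : IntegrableOn (fun θ : ℝ => h ((ρ:ℂ) * Complex.exp (θ * I)))
        (Set.Ioc (0:ℝ) (2*π)) volume := hgc.integrableOn_Ioc
    have hre : (∫ θ in Set.Ioc (0:ℝ) (2*π), (2:ℝ) * (h ((ρ:ℂ) * Complex.exp (θ * I))).re)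
        = 2 * (2*π) * (b 0).re := by
      have h2 := integral_re (𝕜 := ℂ) hgint
      simp only [RCLike.re_to_complex] at h2
      rw [integral_const_mul, h2, hA0]
      have : (b 0 * (2*(π:ℂ))).re = (b 0).re * (2*π) := by
        have hπ : (2*(π:ℂ)) = ((2*π : ℝ) : ℂ) := by push_cast; ring
        rw [hπ, Complex.mul_re, Complex.ofReal_re, Complex.ofReal_im, mul_zero, sub_zero]
      rw [this]
      ring
    have hfinal : ‖b n * (ρ:ℂ)^n * (2*(π:ℂ))‖ ≤ 2 * (2*π) * (b 0).re := by
      rw [← hsplit]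
      calc ‖∫ θ in Set.Ioc (0:ℝ) (2*π),
            (h ((ρ:ℂ) * Complex.exp (θ * I)) + (starRingEnd ℂ) (h ((ρ:ℂ) * Complex.exp (θ * I))))
              * Complex.exp (-(n:ℂ) * θ * I)‖
          ≤ ∫ θ in Set.Ioc (0:ℝ) (2*π),
            ‖(h ((ρ:ℂ) * Complex.exp (θ * I)) + (starRingEnd ℂ) (h ((ρ:ℂ) * Complex.exp (θ * I))))
              * Complex.exp (-(n:ℂ) * θ * I)‖ := norm_integral_le_integral_norm _
        _ = ∫ θ in Set.Ioc (0:ℝ) (2*π), (2:ℝ) * (h ((ρ:ℂ) * Complex.exp (θ * I))).re :=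
            integral_congr_ae (Filter.Eventually.of_forall (fun θ => hnorm_eq θ))
        _ = 2 * (2*π) * (b 0).re := hre
    have hπ : (0:ℝ) < 2*π := by positivity
    have hnval : ‖b n * (ρ:ℂ)^n * (2*(π:ℂ))‖ = ‖b n‖ * ρ^n * (2*π) := by
      have h2 : (2*(π:ℂ)) = ((2*π : ℝ) : ℂ) := by push_cast; ring
      rw [h2, norm_mul, norm_mul, norm_pow, Complex.norm_real, Complex.norm_real,
        Real.norm_eq_abs, Real.norm_eq_abs, _root_.abs_of_nonneg hρ0.le,
        _root_.abs_of_nonneg hπ.le]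
    rw [hnval] at hfinal
    nlinarith [hfinal]
  have hlim : Filter.Tendsto (fun ρ : ℝ => ‖b n‖ * ρ ^ n) (nhdsWithin R (Set.Iio R))
      (nhds (‖b n‖ * R ^ n)) :=
    ((continuous_const.mul (continuous_pow n)).tendsto R).mono_left nhdsWithin_le_nhds
  have hev : ∀ᶠ ρ in nhdsWithin R (Set.Iio R), ‖b n‖ * ρ ^ n ≤ 2 * (b 0).re := by
    filter_upwards [Ioo_mem_nhdsLT_of_mem (Set.mem_Ioc.mpr ⟨hR, le_refl R⟩)] with ρ hρ
    exact key ρ hρ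
  exact le_of_tendsto hlim hev
lemma sep_lemma {G : Set ℂ} (hG : IsOpen G) (hhull : convexHull ℝ G ≠ Set.univ)
    {x : ℂ} (hx : x ∈ G) :
    ∃ a p : ℂ, ‖a‖ = 1 ∧ (∀ z ∈ G, 0 ≤ (a*p - a*z).re) ∧
      (a*p - a*x).re ≤ infDist x (frontier (convexHull ℝ G)) := by
  set K := convexHull ℝ G with hK
  have hKconv : Convex ℝ K := convex_convexHull ℝ G
  have hGS : G ⊆ interior K := interior_maximal (subset_convexHull ℝ G) hG
  have hKne : K.Nonempty := ⟨x, subset_convexHull ℝ G hx⟩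
  have hfr : (frontier K).Nonempty := by
    by_contra hemp
    rw [Set.not_nonempty_iff_eq_empty] at hemp
    rcases frontier_eq_empty_iff.mp hemp with h | h
    · exact hKne.ne_empty h
    · exact hhull h
  obtain ⟨p, hpfr, hpd⟩ := isClosed_frontier.exists_infDist_eq_dist hfr x
  have hpS : p ∉ interior K := fun hp => hpfr.2 hp
  obtain ⟨ℓ, hℓ⟩ := geometric_hahn_banach_open_point hKconv.interior isOpen_interior hpS
  set wc : ℂ := ((ℓ 1 : ℝ) : ℂ) - ((ℓ I : ℝ) : ℂ) * I with hwc
  have hℓeq : ∀ z : ℂ, (wc * z).re = ℓ z := by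
    intro z
    have hz : z = (z.re : ℂ) * 1 + (z.im : ℂ) * I := by simp [Complex.re_add_im]
    have hz' : ℓ z = z.re * ℓ 1 + z.im * ℓ I := by
      conv_lhs => rw [hz]
      have h1 : ((z.re : ℂ) * 1 : ℂ) = z.re • (1:ℂ) := by simp [Complex.real_smul]
      have h2 : ((z.im : ℂ) * I : ℂ) = z.im • I := by simp [Complex.real_smul]
      rw [h1, h2, map_add]
      simp only [ContinuousLinearMap.map_smul, smul_eq_mul]
    rw [hz']
    simp [hwc, Complex.mul_re, Complex.sub_re, Complex.sub_im, Complex.mul_im,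
      Complex.I_re, Complex.I_im]
    ring
  have hwc0 : wc ≠ 0 := by
    intro h0
    have h1 := hℓ x (hGS hx)
    have h2 : ℓ x = 0 := by rw [← hℓeq, h0, zero_mul]; rfl
    have h3 : ℓ p = 0 := by rw [← hℓeq, h0, zero_mul]; rfl
    rw [h2, h3] at h1
    exact lt_irrefl 0 h1
  have hwcn : (0:ℝ) < ‖wc‖ := norm_pos_iff.mpr hwc0
  refine ⟨((‖wc‖⁻¹ : ℝ) : ℂ) * wc, p, ?_, ?_, ?_⟩
  · rw [norm_mul, Complex.norm_real, Real.norm_eq_abs, _root_.abs_of_nonneg (by positivity),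
      inv_mul_cancel₀ hwcn.ne']
  · intro z hz
    have h1 := hℓ z (hGS hz)
    have : ((‖wc‖⁻¹ : ℝ) : ℂ) * wc * p - ((‖wc‖⁻¹ : ℝ) : ℂ) * wc * z
        = ((‖wc‖⁻¹ : ℝ) : ℂ) * (wc * p - wc * z) := by ring
    rw [this, Complex.re_ofReal_mul]
    have : (wc * p - wc * z).re = ℓ p - ℓ z := by
      rw [Complex.sub_re, hℓeq, hℓeq]
    rw [this]
    have : 0 ≤ ℓ p - ℓ z := by linarith
    positivity
  · set a : ℂ := ((‖wc‖⁻¹ : ℝ) : ℂ) * wc with ha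
    have ha1 : ‖a‖ = 1 := by
      rw [ha, norm_mul, Complex.norm_real, Real.norm_eq_abs, _root_.abs_of_nonneg (by positivity),
        inv_mul_cancel₀ hwcn.ne']
    have : a * p - a * x = a * (p - x) := by ring
    rw [this]
    calc (a * (p - x)).re ≤ ‖a * (p - x)‖ := Complex.re_le_norm _
      _ = ‖p - x‖ := by rw [norm_mul, ha1, one_mul]
      _ = dist x p := by rw [dist_eq_norm, norm_sub_rev]
      _ = infDist x (frontier K) := hpd.symm
lemma pow_rpow_comm {u : ℝ} (hu : 0 ≤ u) (n : ℕ) (q : ℝ) : (u ^ n) ^ q = (u ^ q) ^ n := by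
  rw [← Real.rpow_natCast u n, ← Real.rpow_natCast (u ^ q) n, ← Real.rpow_mul hu,
    ← Real.rpow_mul hu, mul_comm]

set_option maxHeartbeats 1000000 in
theorem stmt7 (R r q : ℝ) (m : ℕ) (f : ℂ → ℂ) (c : ℕ → ℂ) (G : Set ℂ)
    (hR : 0 < R) (hq : 0 < q) (hm : 1 ≤ m) (hr : 0 ≤ r) (h3 : r < R)
    (hG : IsOpen G) (hGconn : IsConnected G)
    (hhull : convexHull ℝ G ≠ Set.univ)
    (hf : DifferentiableOn ℂ f (ball 0 R))
    (hmaps : Set.MapsTo f (ball 0 R) G)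
    (hsum : ∀ w ∈ ball (0:ℂ) R, HasSum (fun n : ℕ => c n * w ^ n) (f w))
    (z : ℂ) (hz : ‖z‖ = r) :
    (∑' k : ℕ, ‖c (m + k) * z ^ (m + k)‖ ^ q) ^ (1 / q) ≤
      2 * r ^ m / (R ^ (m - 1) * (R ^ q - r ^ q) ^ (1 / q)) *
        infDist (c 0) (frontier (convexHull ℝ G)) := by
  have h0ball : (0:ℂ) ∈ ball (0:ℂ) R := by simpa using hR
  -- c 0 = f 0
  have hc0 : c 0 = f 0 := by
    have h1 := hsum 0 h0ball
    have h2 : (fun n : ℕ => c n * (0:ℂ) ^ n) = fun n : ℕ => if n = 0 then c 0 else 0 := by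
      funext n; cases n <;> simp
    rw [h2] at h1
    exact (h1.unique (hasSum_ite_eq 0 (c 0))).symm
  have hc0G : c 0 ∈ G := by rw [hc0]; exact hmaps h0ball
  set d := infDist (c 0) (frontier (convexHull ℝ G)) with hd
  have hd0 : 0 ≤ d := infDist_nonneg
  obtain ⟨a, p, ha1, hge, hle⟩ := sep_lemma hG hhull hc0G
  -- coefficient estimates
  set b : ℕ → ℂ := fun k => if k = 0 then a * p - a * c 0 else -(a * c k) with hb
  set h : ℂ → ℂ := fun w => a * p - a * f w with hh
  have hconth : ContinuousOn h (ball 0 R) :=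
    continuousOn_const.sub (continuousOn_const.mul hf.continuousOn)
  have hsumb : ∀ w ∈ ball (0:ℂ) R, HasSum (fun k => b k * w ^ k) (h w) := by
    intro w hw
    have h1 := (hsum w hw).mul_left (-a)
    have h2 : HasSum (fun k : ℕ => if k = 0 then a * p else 0) (a * p) := hasSum_ite_eq 0 _
    have h3 := h1.add h2
    have h4 : (fun k : ℕ => -a * (c k * w ^ k) + (if k = 0 then a * p else 0))
        = fun k => b k * w ^ k := by
      funext k
      cases k with
      | zero => simp [hb]; ring
      | succ k => simp [hb]; ring
    rw [h4] at h3
    have : -a * f w + a * p = h w := by rw [hh]; ring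
    rwa [this] at h3
  have hposb : ∀ w ∈ ball (0:ℂ) R, 0 ≤ (h w).re := fun w hw => hge (f w) (hmaps hw)
  have hb0 : (b 0).re ≤ d := by simpa [hb] using hle
  have hcn : ∀ n : ℕ, 1 ≤ n → ‖c n‖ * R ^ n ≤ 2 * d := by
    intro n hn
    have h1 := cara hR hconth hsumb hposb hn
    have h2 : ‖b n‖ = ‖c n‖ := by
      have hn' : n ≠ 0 := by omega
      simp [hb, hn', norm_mul, ha1]
    rw [h2] at h1
    linarith
  -- geometric series bound
  set u := r / R with hu
  have hu0 : 0 ≤ u := by positivity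
  have hu1 : u < 1 := by rw [hu, div_lt_one hR]; exact h3
  set t := u ^ q with ht
  have ht0 : 0 ≤ t := Real.rpow_nonneg hu0 q
  have ht1 : t < 1 := by
    rw [ht]
    calc u ^ q < 1 ^ q := Real.rpow_lt_rpow hu0 hu1 hq
      _ = 1 := Real.one_rpow q
  have hterm : ∀ k : ℕ, ‖c (m + k) * z ^ (m + k)‖ ^ q ≤ ((2*d) ^ q * t ^ m) * t ^ k := by
    intro k
    have hn : 1 ≤ m + k := le_add_right hm
    have hbase : ‖c (m + k) * z ^ (m + k)‖ ≤ (2*d) * u ^ (m + k) := by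
      have h1 : ‖c (m + k) * z ^ (m + k)‖ = ‖c (m + k)‖ * r ^ (m + k) := by
        rw [norm_mul, norm_pow, hz]
      have h2 : ‖c (m + k)‖ * r ^ (m + k) = (‖c (m + k)‖ * R ^ (m + k)) * u ^ (m + k) := by
        rw [hu, div_pow, mul_assoc, mul_div_assoc']
        congr 1
        rw [mul_comm, mul_div_assoc, div_self (by positivity : R ^ (m+k) ≠ 0), mul_one]
      rw [h1, h2]
      exact mul_le_mul_of_nonneg_right (hcn _ hn) (by positivity)
    calc ‖c (m + k) * z ^ (m + k)‖ ^ q ≤ ((2*d) * u ^ (m + k)) ^ q :=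
          Real.rpow_le_rpow (norm_nonneg _) hbase hq.le
      _ = (2*d) ^ q * (u ^ (m + k)) ^ q := Real.mul_rpow (by positivity) (by positivity)
      _ = (2*d) ^ q * t ^ (m + k) := by rw [pow_rpow_comm hu0, ht]
      _ = ((2*d) ^ q * t ^ m) * t ^ k := by rw [pow_add]; ring
  have hsummable : Summable (fun k : ℕ => ((2*d) ^ q * t ^ m) * t ^ k) :=
    (summable_geometric_of_lt_one ht0 ht1).mul_left _
  have hLsummable : Summable (fun k : ℕ => ‖c (m + k) * z ^ (m + k)‖ ^ q) :=
    Summable.of_nonneg_of_le (fun k => Real.rpow_nonneg (norm_nonneg _) q) hterm hsummable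
  have hsum_le : (∑' k : ℕ, ‖c (m + k) * z ^ (m + k)‖ ^ q)
      ≤ ((2*d) ^ q * t ^ m) * (1 - t)⁻¹ := by
    calc (∑' k : ℕ, ‖c (m + k) * z ^ (m + k)‖ ^ q)
        ≤ ∑' k : ℕ, ((2*d) ^ q * t ^ m) * t ^ k := Summable.tsum_le_tsum hterm hLsummable hsummable
      _ = ((2*d) ^ q * t ^ m) * ∑' k : ℕ, t ^ k := tsum_mul_left
      _ = ((2*d) ^ q * t ^ m) * (1 - t)⁻¹ := by rw [tsum_geometric_of_lt_one ht0 ht1]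
  have hLnn : 0 ≤ ∑' k : ℕ, ‖c (m + k) * z ^ (m + k)‖ ^ q :=
    tsum_nonneg (fun k => Real.rpow_nonneg (norm_nonneg _) q)
  have hmain : (∑' k : ℕ, ‖c (m + k) * z ^ (m + k)‖ ^ q) ^ (1/q)
      ≤ (((2*d) ^ q * t ^ m) * (1 - t)⁻¹) ^ (1/q) :=
    Real.rpow_le_rpow hLnn hsum_le (by positivity)
  refine hmain.trans_eq ?_
  -- now the algebra
  have hRq : (0:ℝ) < R ^ q := Real.rpow_pos_of_pos hR q
  have hYpos : (0:ℝ) < R ^ q - r ^ q := by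
    have : r ^ q < R ^ q := Real.rpow_lt_rpow hr h3 hq
    linarith
  have h1t : 1 - t = (R ^ q - r ^ q) / R ^ q := by
    rw [ht, hu, Real.div_rpow hr hR.le]
    field_simp
  have hqq : q * (1/q) = 1 := by field_simp
  have hX : ((2*d) * u ^ m) ^ q = (2*d) ^ q * t ^ m := by
    rw [Real.mul_rpow (by positivity) (by positivity), pow_rpow_comm hu0, ← ht]
  rw [← hX, h1t]
  set s := (R ^ q - r ^ q) ^ (1/q) with hsdef
  have hs : (0:ℝ) < s := Real.rpow_pos_of_pos hYpos _
  have hX0 : (0:ℝ) ≤ (2*d) * u ^ m := by positivity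
  have e1 : ((R ^ q - r ^ q) / R ^ q)⁻¹ = R ^ q / (R ^ q - r ^ q) := by rw [inv_div]
  rw [e1, Real.mul_rpow (by positivity) (by positivity),
    Real.div_rpow (by positivity) (by positivity)]
  have e2 : (((2*d) * u ^ m) ^ q) ^ (1/q) = (2*d) * u ^ m := by
    rw [← Real.rpow_mul hX0, hqq, Real.rpow_one]
  have e3 : ((R ^ q) ^ (1/q)) = R := by
    rw [← Real.rpow_mul hR.le, hqq, Real.rpow_one]
  rw [e2, e3, ← hsdef]
  have hRm : (R:ℝ) ^ m = R ^ (m-1) * R := by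
    rw [← pow_succ]
    congr 1
    omega
  rw [hu, div_pow, hRm]
  field_simp
end

section
/- Let f be holomorphic on D_R, let a ∈ D_R with d_a = R - |a| = dist(a, ∂D_R), and let f(z) = Σ_{k≥0} c_k(a)(z-a)^k be its expansion at a. Suppose Re f > 0 on D_R. Then for every z with |z - a| = r < d_a, Σ_{k=1}^∞ |c_k(a)(z-a)^k| ≤ (2Rr) / ((2R - d_a)(d_a - r)) · Re f(a). -/
open Complex Metric Function MeasureTheory

private lemma conj_intervalIntegral (g : ℝ → ℂ) (x y : ℝ) :
    (∫ θ in x..y, (starRingEnd ℂ) (g θ)) = (starRingEnd ℂ) (∫ θ in x..y, g θ) := by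
  rw [intervalIntegral, intervalIntegral, integral_conj, integral_conj, map_sub]

private lemma re_intervalIntegral (g : ℝ → ℂ) (x y : ℝ)
    (h : IntervalIntegrable g volume x y) :
    (∫ θ in x..y, (g θ).re) = (∫ θ in x..y, g θ).re := by
  rw [intervalIntegral, intervalIntegral, Complex.sub_re]
  simp only [← RCLike.re_to_complex]
  rw [integral_re h.1, integral_re h.2]

private lemma circ_theta (ρ : ℝ) (g : ℂ → ℂ) :
    (∮ w in C(0, ρ), g w) = I * ∫ θ in (0:ℝ)..(2*Real.pi), circleMap 0 ρ θ * g (circleMap 0 ρ θ) := by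
  rw [circleIntegral, ← intervalIntegral.integral_const_mul]
  refine intervalIntegral.integral_congr fun θ _ => ?_
  simp only [deriv_circleMap, smul_eq_mul]
  ring

private lemma dslope_diffOn {R : ℝ} {f : ℂ → ℂ} {a : ℂ} (hf : DifferentiableOn ℂ f (ball 0 R))
    (ha : a ∈ ball (0:ℂ) R) : DifferentiableOn ℂ (dslope f a) (ball 0 R) := by
  intro x hx
  rcases eq_or_ne x a with rfl | hxa
  · obtain ⟨p, hp⟩ : AnalyticAt ℂ f x := hf.analyticAt (isOpen_ball.mem_nhds hx)
    exact hp.has_fpower_series_dslope_fslope.differentiableAt.differentiableWithinAt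
  · exact ((differentiableAt_dslope_of_ne hxa).2
      (hf.differentiableAt (isOpen_ball.mem_nhds hx))).differentiableWithinAt

private lemma cauchy_formula_iterate {R ρ : ℝ} {a : ℂ} (hρR : ρ < R) (haρ : ‖a‖ < ρ) :
    ∀ (n : ℕ) (g : ℂ → ℂ), DifferentiableOn ℂ g (ball 0 R) →
      (∮ w in C(0, ρ), g w / (w - a) ^ (n + 1)) =
        (2 * Real.pi * I) * ((swap dslope a)^[n] g a) := by
  have hρ0 : 0 < ρ := (norm_nonneg a).trans_lt haρ
  have haρ' : a ∈ ball (0:ℂ) ρ := mem_ball_zero_iff.mpr haρ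
  have haR : a ∈ ball (0:ℂ) R := mem_ball_zero_iff.mpr (haρ.trans hρR)
  have hsub : closedBall (0:ℂ) ρ ⊆ ball 0 R := closedBall_subset_ball hρR
  have hsph : sphere (0:ℂ) ρ ⊆ ball 0 R := Metric.sphere_subset_closedBall.trans hsub
  have hwa : ∀ w ∈ sphere (0:ℂ) ρ, w - a ≠ 0 := by
    intro w hw h
    rw [mem_sphere_zero_iff_norm] at hw
    rw [sub_eq_zero] at h
    rw [h] at hw
    exact haρ.ne hw
  intro n
  induction n with
  | zero =>
    intro g hg
    have h0 := (hg.mono hsub).circleIntegral_sub_inv_smul haρ'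
    have h1 : (∮ w in C(0, ρ), g w / (w - a) ^ (0 + 1)) = ∮ z in C(0, ρ), (z - a)⁻¹ • g z :=
      circleIntegral.integral_congr hρ0.le fun w _ => by
        simp [pow_one, div_eq_inv_mul, smul_eq_mul]
    rw [h1, h0]
    simp [smul_eq_mul]
  | succ n ih =>
    intro g hg
    have hg1 : DifferentiableOn ℂ (dslope g a) (ball 0 R) := dslope_diffOn hg haR
    have H := ih (dslope g a) hg1
    have key : Set.EqOn (fun w => dslope g a w / (w - a) ^ (n + 1))
        (fun w => g w / (w - a) ^ (n + 2) - g a * (w - a) ^ (-(n + 2) : ℤ))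
        (sphere (0:ℂ) ρ) := by
      intro w hw
      have hne := hwa w hw
      have hwa' : w ≠ a := sub_ne_zero.mp hne
      simp only [dslope_of_ne _ hwa', slope_def_field]
      rw [zpow_neg, show ((n:ℤ) + 2) = ((n + 2 : ℕ) : ℤ) by push_cast; ring, zpow_natCast,
        div_div, ← pow_succ', sub_div]
      ring_nf
    have hzpow : CircleIntegrable (fun w => ((w - a) ^ (-(n + 2) : ℤ) : ℂ)) 0 ρ := by
      rw [circleIntegrable_sub_zpow_iff]
      right; right
      rw [abs_of_pos hρ0]
      intro h
      exact absurd (mem_sphere_zero_iff_norm.mp h) haρ.ne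
    have hint2 : CircleIntegrable (fun w => g a * (w - a) ^ (-(n + 2) : ℤ)) 0 ρ :=
      IntervalIntegrable.const_mul hzpow (g a)
    have hint3 : CircleIntegrable (fun w => g w / (w - a) ^ (n + 2)) 0 ρ := by
      refine ContinuousOn.circleIntegrable hρ0.le ?_
      exact ((hg.continuousOn.mono hsph).div
        (((continuousOn_id.sub continuousOn_const).pow _)) fun w hw => pow_ne_zero _ (hwa w hw))
    have hz0 : (∮ z in C(0, ρ), (z - a) ^ (-(n + 2) : ℤ)) = 0 :=
      circleIntegral.integral_sub_zpow_of_ne (by omega) 0 a ρ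
    have e := circleIntegral.integral_congr (f := fun w => dslope g a w / (w - a) ^ (n + 1)) hρ0.le key
    rw [circleIntegral.integral_sub hint3 hint2, circleIntegral.integral_const_mul, hz0,
      mul_zero, sub_zero] at e
    rw [show n + 1 + 1 = n + 2 from rfl, ← e, H, iterate_succ_apply]

private lemma iterate_dslope_val {R : ℝ} {f : ℂ → ℂ} {a : ℂ}
    (hf : DifferentiableOn ℂ f (ball 0 R)) (ha : a ∈ ball (0:ℂ) R) (n : ℕ) :
    (swap dslope a)^[n] f a = iteratedDeriv n f a / n.factorial := by
  obtain ⟨p, hp⟩ : AnalyticAt ℂ f a := hf.analyticAt (isOpen_ball.mem_nhds ha)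
  have e1 : ((FormalMultilinearSeries.fslope^[n] p) 0) (fun _ => 1) = (swap dslope a)^[n] f a :=
    (hp.has_fpower_series_iterate_dslope_fslope n).coeff_zero _
  have e2 : ((FormalMultilinearSeries.fslope^[n] p) 0) (fun _ => 1) =
      (FormalMultilinearSeries.fslope^[n] p).coeff 0 := rfl
  have e3 := p.coeff_iterate_fslope n 0
  rw [zero_add] at e3
  have h1 : (swap dslope a)^[n] f a = p.coeff n := by rw [← e1, e2, e3]
  obtain ⟨rr, hrr⟩ := hp
  have h2 := hrr.factorial_smul (1 : ℂ) n
  rw [← iteratedDeriv_eq_iteratedFDeriv] at h2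
  have h3 : (n.factorial : ℂ) * p.coeff n = iteratedDeriv n f a := by
    rw [← h2, nsmul_eq_mul]
    rfl
  rw [h1, eq_div_iff (by exact_mod_cast n.factorial_ne_zero), ← h3]
  ring


private lemma coeff_est {R ρ : ℝ} {f : ℂ → ℂ} {a : ℂ} (hρR : ρ < R) (haρ : ‖a‖ < ρ)
    (hf : DifferentiableOn ℂ f (ball 0 R)) (hpos : ∀ w ∈ ball (0:ℂ) R, 0 < (f w).re) (k : ℕ) :
    ‖iteratedDeriv (k + 1) f a / ((k + 1).factorial : ℂ)‖ ≤
      2 * ρ / ((ρ + ‖a‖) * (ρ - ‖a‖) ^ (k + 1)) * (f a).re := by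
  have hρ0 : 0 < ρ := (norm_nonneg a).trans_lt haρ
  have haR : a ∈ ball (0:ℂ) R := mem_ball_zero_iff.mpr (haρ.trans hρR)
  set δ : ℝ := ρ - ‖a‖ with hδ
  have hδ0 : 0 < δ := sub_pos.mpr haρ
  have hρa2 : 0 < ρ^2 - ‖a‖^2 := by nlinarith [norm_nonneg a]
  set w : ℝ → ℂ := fun θ => circleMap 0 ρ θ with hw
  have hwnorm : ∀ θ, ‖w θ‖ = ρ := fun θ => by
    rw [hw]; simp only [norm_circleMap_zero]; exact abs_of_pos hρ0
  have hwmem : ∀ θ, w θ ∈ ball (0:ℂ) R := fun θ => mem_ball_zero_iff.mpr (by rw [hwnorm]; exact hρR)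
  have hwsub : ∀ θ, δ ≤ ‖w θ - a‖ := fun θ => by
    have h := norm_sub_norm_le (w θ) a
    rw [hwnorm] at h; linarith
  have hwane : ∀ θ, w θ - a ≠ 0 := fun θ h => by
    have h2 := hwsub θ
    rw [h, norm_zero] at h2
    linarith
  have hwne : ∀ θ, w θ ≠ 0 := fun θ h => by
    have := hwnorm θ; rw [h, norm_zero] at this; exact hρ0.ne this
  have hcw : Continuous w := continuous_circleMap 0 ρ
  have hcf : Continuous fun θ => f (w θ) := hf.continuousOn.comp_continuous hcw hwmem
  have hK : Continuous fun θ => w θ / (w θ - a) ^ (k + 2) :=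
    hcw.div ((hcw.sub continuous_const).pow _) fun θ => pow_ne_zero _ (hwane θ)
  have hD : ∀ z : ℂ, ‖z‖ ≤ ρ → ((ρ:ℂ)^2 - (starRingEnd ℂ) a * z ≠ 0) := by
    intro z hz h
    rw [sub_eq_zero] at h
    have h1 : ‖(starRingEnd ℂ) a * z‖ ≤ ‖a‖ * ρ := by
      rw [norm_mul, RCLike.norm_conj]
      exact mul_le_mul_of_nonneg_left hz (norm_nonneg a)
    rw [← h] at h1
    have h2 : ‖((ρ:ℂ))^2‖ = ρ^2 := by
      rw [norm_pow, Complex.norm_real, Real.norm_eq_abs, abs_of_pos hρ0]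
    rw [h2] at h1
    nlinarith
  have hvanish : ∀ g : ℂ → ℂ, ContinuousOn g (closedBall 0 ρ) →
      (∀ z ∈ ball (0:ℂ) ρ, DifferentiableAt ℂ g z) → (∮ z in C(0, ρ), g z) = 0 :=
    fun g hc hd => circleIntegral_eq_zero_of_differentiable_on_off_countable hρ0.le
      Set.countable_empty hc (fun z hz => hd z hz.1)
  have hπ := Real.pi_pos
  set c : ℂ := iteratedDeriv (k + 1) f a / ((k + 1).factorial : ℂ) with hc
  -- Step A
  have hA : (∫ θ in (0:ℝ)..(2*Real.pi), f (w θ) * (w θ / (w θ - a) ^ (k + 2))) =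
      2 * (Real.pi:ℂ) * c := by
    have h1 := cauchy_formula_iterate hρR haρ (k+1) f hf
    rw [iterate_dslope_val hf haR, circ_theta] at h1
    have h2 : (∫ θ in (0:ℝ)..(2*Real.pi),
        circleMap 0 ρ θ * (f (circleMap 0 ρ θ) / (circleMap 0 ρ θ - a) ^ (k + 1 + 1))) =
        ∫ θ in (0:ℝ)..(2*Real.pi), f (w θ) * (w θ / (w θ - a) ^ (k + 2)) :=
      intervalIntegral.integral_congr fun θ _ => by rw [hw]; ring
    rw [h2] at h1
    exact mul_left_cancel₀ I_ne_zero (h1.trans (by rw [hc]; ring))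
  -- Step B
  have hB0 : (∮ z in C(0, ρ), f z * z ^ k / ((ρ:ℂ)^2 - (starRingEnd ℂ) a * z) ^ (k + 2)) = 0 := by
    refine hvanish _ ?_ ?_
    · refine ContinuousOn.div
        (((hf.continuousOn.mono ((closedBall_subset_ball hρR))).mul (continuous_pow k).continuousOn))
        (((continuous_const.sub (continuous_const.mul continuous_id)).pow _).continuousOn)
        fun z hz => pow_ne_zero _ (hD z (mem_closedBall_zero_iff.mp hz))
    · intro z hz
      have hz' : ‖z‖ ≤ ρ := le_of_lt (mem_ball_zero_iff.mp hz)
      have h1 : DifferentiableAt ℂ f z :=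
        hf.differentiableAt (isOpen_ball.mem_nhds (ball_subset_ball hρR.le hz))
      exact (h1.mul (differentiableAt_pow k)).div
        (((differentiableAt_const _).sub ((differentiableAt_const _).mul differentiableAt_id)).pow _)
        (pow_ne_zero _ (hD z hz'))
  have hmc : ∀ θ, w θ * (starRingEnd ℂ) (w θ) = ((ρ:ℂ))^2 := by
    intro θ
    rw [Complex.mul_conj, Complex.normSq_eq_norm_sq, hwnorm]
    push_cast; ring
  have hfac : ∀ θ, ((ρ:ℂ))^2 - (starRingEnd ℂ) a * w θ =
      w θ * ((starRingEnd ℂ) (w θ) - (starRingEnd ℂ) a) := by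
    intro θ; rw [← hmc θ]; ring
  have hconjK : ∀ θ, (starRingEnd ℂ) (w θ / (w θ - a) ^ (k + 2)) =
      ((ρ:ℂ)^2 * w θ ^ (k+1)) / ((ρ:ℂ)^2 - (starRingEnd ℂ) a * w θ) ^ (k + 2) := by
    intro θ
    have hcne : (starRingEnd ℂ) (w θ) - (starRingEnd ℂ) a ≠ 0 := by
      rw [← map_sub, starRingEnd_apply]
      exact star_ne_zero.mpr (hwane θ)
    rw [map_div₀, map_pow, map_sub,
      div_eq_div_iff (pow_ne_zero _ hcne) (pow_ne_zero _ (hD (w θ) (le_of_eq (hwnorm θ))))]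
    rw [hfac θ, mul_pow, ← hmc θ]
    ring
  have hB : (∫ θ in (0:ℝ)..(2*Real.pi), (starRingEnd ℂ) (f (w θ)) * (w θ / (w θ - a) ^ (k + 2))) = 0 := by
    have e1 : (∫ θ in (0:ℝ)..(2*Real.pi), f (w θ) * (starRingEnd ℂ) (w θ / (w θ - a) ^ (k + 2))) = 0 := by
      have e2 : (∫ θ in (0:ℝ)..(2*Real.pi), f (w θ) * (starRingEnd ℂ) (w θ / (w θ - a) ^ (k + 2))) =
          (ρ:ℂ)^2 * ∫ θ in (0:ℝ)..(2*Real.pi), circleMap 0 ρ θ *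
            (f (circleMap 0 ρ θ) * circleMap 0 ρ θ ^ k /
              ((ρ:ℂ)^2 - (starRingEnd ℂ) a * circleMap 0 ρ θ) ^ (k + 2)) := by
        rw [← intervalIntegral.integral_const_mul]
        refine intervalIntegral.integral_congr fun θ _ => ?_
        rw [hconjK θ, hw]
        ring
      rw [circ_theta] at hB0
      rw [e2, (mul_eq_zero.mp hB0).resolve_left I_ne_zero, mul_zero]
    calc (∫ θ in (0:ℝ)..(2*Real.pi), (starRingEnd ℂ) (f (w θ)) * (w θ / (w θ - a) ^ (k + 2)))
        = ∫ θ in (0:ℝ)..(2*Real.pi),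
            (starRingEnd ℂ) (f (w θ) * (starRingEnd ℂ) (w θ / (w θ - a) ^ (k + 2))) :=
          intervalIntegral.integral_congr fun θ _ => by rw [map_mul, Complex.conj_conj]
      _ = (starRingEnd ℂ) (∫ θ in (0:ℝ)..(2*Real.pi),
            f (w θ) * (starRingEnd ℂ) (w θ / (w θ - a) ^ (k + 2))) := conj_intervalIntegral _ _ _
      _ = 0 := by rw [e1, map_zero]
  -- Step C : Poisson representation
  have hCa : (∫ θ in (0:ℝ)..(2*Real.pi), f (w θ) * (w θ / (w θ - a))) = 2 * (Real.pi:ℂ) * f a := by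
    have h1 := cauchy_formula_iterate hρR haρ 0 f hf
    rw [iterate_dslope_val hf haR 0, circ_theta] at h1
    have h2 : (∫ θ in (0:ℝ)..(2*Real.pi),
        circleMap 0 ρ θ * (f (circleMap 0 ρ θ) / (circleMap 0 ρ θ - a) ^ (0 + 1))) =
        ∫ θ in (0:ℝ)..(2*Real.pi), f (w θ) * (w θ / (w θ - a)) :=
      intervalIntegral.integral_congr fun θ _ => by rw [hw]; ring
    rw [h2] at h1
    refine mul_left_cancel₀ I_ne_zero (h1.trans ?_)
    rw [Nat.factorial_zero]
    push_cast
    rw [iteratedDeriv_zero]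
    ring
  have hCb : (∫ θ in (0:ℝ)..(2*Real.pi),
      f (w θ) * ((starRingEnd ℂ) a * w θ / ((ρ:ℂ)^2 - (starRingEnd ℂ) a * w θ))) = 0 := by
    have hB1 : (∮ z in C(0, ρ), f z * (starRingEnd ℂ) a / ((ρ:ℂ)^2 - (starRingEnd ℂ) a * z)) = 0 := by
      refine hvanish _ ?_ ?_
      · refine ContinuousOn.div ((hf.continuousOn.mono (closedBall_subset_ball hρR)).mul
          continuousOn_const)
          ((continuous_const.sub (continuous_const.mul continuous_id)).continuousOn)
          fun z hz => hD z (mem_closedBall_zero_iff.mp hz)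
      · intro z hz
        have h1 : DifferentiableAt ℂ f z :=
          hf.differentiableAt (isOpen_ball.mem_nhds (ball_subset_ball hρR.le hz))
        exact (h1.mul (differentiableAt_const _)).div
          ((differentiableAt_const _).sub ((differentiableAt_const _).mul differentiableAt_id))
          (hD z (le_of_lt (mem_ball_zero_iff.mp hz)))
    rw [circ_theta] at hB1
    have h2 := (mul_eq_zero.mp hB1).resolve_left I_ne_zero
    rw [← h2]
    refine intervalIntegral.integral_congr fun θ _ => ?_
    rw [hw]
    ring
  have hP : ∀ θ, ((((ρ^2 - ‖a‖^2) / ‖w θ - a‖^2 : ℝ)) : ℂ) =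
      w θ / (w θ - a) + (starRingEnd ℂ) a * w θ / ((ρ:ℂ)^2 - (starRingEnd ℂ) a * w θ) := by
    intro θ
    have ha2 : ((‖a‖:ℂ))^2 = a * (starRingEnd ℂ) a := by
      rw [Complex.mul_conj, Complex.normSq_eq_norm_sq]
      push_cast; ring
    have h3 : ((‖w θ - a‖:ℂ))^2 = (w θ - a) * ((starRingEnd ℂ) (w θ) - (starRingEnd ℂ) a) := by
      rw [← map_sub, Complex.mul_conj, Complex.normSq_eq_norm_sq]
      push_cast; ring
    have hcne : (starRingEnd ℂ) (w θ) - (starRingEnd ℂ) a ≠ 0 := by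
      rw [← map_sub, starRingEnd_apply]
      exact star_ne_zero.mpr (hwane θ)
    have hDθ := hD (w θ) (le_of_eq (hwnorm θ))
    push_cast
    rw [ha2, h3, div_add_div _ _ (hwane θ) hDθ, div_eq_div_iff (mul_ne_zero (hwane θ) hcne)
      (mul_ne_zero (hwane θ) hDθ), hfac θ, ← hmc θ]
    ring
  have hintCa : IntervalIntegrable (fun θ => f (w θ) * (w θ / (w θ - a))) volume 0 (2*Real.pi) :=
    (hcf.mul (hcw.div (hcw.sub continuous_const) fun θ => hwane θ)).intervalIntegrable _ _
  have hintCb : IntervalIntegrable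
      (fun θ => f (w θ) * ((starRingEnd ℂ) a * w θ / ((ρ:ℂ)^2 - (starRingEnd ℂ) a * w θ)))
      volume 0 (2*Real.pi) := by
    refine Continuous.intervalIntegrable ?_ _ _
    exact hcf.mul ((continuous_const.mul hcw).div
      (continuous_const.sub (continuous_const.mul hcw)) fun θ => hD (w θ) (le_of_eq (hwnorm θ)))
  have hC : (∫ θ in (0:ℝ)..(2*Real.pi), f (w θ) * ((((ρ^2 - ‖a‖^2) / ‖w θ - a‖^2 : ℝ)) : ℂ)) =
      2 * (Real.pi:ℂ) * f a := by
    have e : (∫ θ in (0:ℝ)..(2*Real.pi), f (w θ) * ((((ρ^2 - ‖a‖^2) / ‖w θ - a‖^2 : ℝ)) : ℂ)) =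
        ∫ θ in (0:ℝ)..(2*Real.pi), (f (w θ) * (w θ / (w θ - a)) +
          f (w θ) * ((starRingEnd ℂ) a * w θ / ((ρ:ℂ)^2 - (starRingEnd ℂ) a * w θ))) :=
      intervalIntegral.integral_congr fun θ _ => by rw [hP θ]; ring
    rw [e, intervalIntegral.integral_add hintCa hintCb, hCa, hCb, add_zero]
  have hPcont : Continuous fun θ => (ρ^2 - ‖a‖^2) / ‖w θ - a‖^2 := by
    refine continuous_const.div ((hcw.sub continuous_const).norm.pow 2) fun θ => ?_
    exact pow_ne_zero _ (norm_ne_zero_iff.mpr (hwane θ))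
  have hCre : (∫ θ in (0:ℝ)..(2*Real.pi), (f (w θ)).re * ((ρ^2 - ‖a‖^2) / ‖w θ - a‖^2)) =
      2 * Real.pi * (f a).re := by
    have hint : IntervalIntegrable (fun θ => f (w θ) * ((((ρ^2 - ‖a‖^2) / ‖w θ - a‖^2 : ℝ)) : ℂ))
        volume 0 (2*Real.pi) :=
      (hcf.mul (Complex.continuous_ofReal.comp hPcont)).intervalIntegrable _ _
    have e1 := re_intervalIntegral _ 0 (2*Real.pi) hint
    rw [hC] at e1
    have e2 : (∫ θ in (0:ℝ)..(2*Real.pi),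
        (f (w θ) * ((((ρ^2 - ‖a‖^2) / ‖w θ - a‖^2 : ℝ)) : ℂ)).re) =
        ∫ θ in (0:ℝ)..(2*Real.pi), (f (w θ)).re * ((ρ^2 - ‖a‖^2) / ‖w θ - a‖^2) :=
      intervalIntegral.integral_congr fun θ _ => by
        rw [mul_comm, Complex.re_ofReal_mul, mul_comm]
    rw [e2] at e1
    rw [e1]
    simp [Complex.mul_re, Complex.ofReal_re]
  -- Step D : the estimate
  have hreθ : ∀ θ, 0 < (f (w θ)).re := fun θ => hpos _ (hwmem θ)
  have hre0 : 0 < (f a).re := hpos a haR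
  have hsum : (∫ θ in (0:ℝ)..(2*Real.pi), ((2 * (f (w θ)).re : ℝ):ℂ) * (w θ / (w θ - a) ^ (k + 2))) =
      2 * (Real.pi:ℂ) * c := by
    have hi1 : IntervalIntegrable (fun θ => f (w θ) * (w θ / (w θ - a) ^ (k + 2)))
        volume 0 (2*Real.pi) := (hcf.mul hK).intervalIntegrable _ _
    have hi2 : IntervalIntegrable
        (fun θ => (starRingEnd ℂ) (f (w θ)) * (w θ / (w θ - a) ^ (k + 2)))
        volume 0 (2*Real.pi) := by
      refine Continuous.intervalIntegrable ?_ _ _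
      exact (Complex.continuous_conj.comp hcf).mul hK
    have e : (∫ θ in (0:ℝ)..(2*Real.pi), ((2 * (f (w θ)).re : ℝ):ℂ) * (w θ / (w θ - a) ^ (k + 2))) =
        ∫ θ in (0:ℝ)..(2*Real.pi), (f (w θ) * (w θ / (w θ - a) ^ (k + 2)) +
          (starRingEnd ℂ) (f (w θ)) * (w θ / (w θ - a) ^ (k + 2))) := by
      refine intervalIntegral.integral_congr fun θ _ => ?_
      rw [← add_mul, Complex.add_conj]
    rw [e, intervalIntegral.integral_add hi1 hi2, hA, hB, add_zero]
  have hnc : 2 * Real.pi * ‖c‖ = ‖(2 * (Real.pi:ℂ) * c)‖ := by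
    rw [norm_mul, norm_mul]
    simp [Complex.norm_real, abs_of_pos hπ, Real.norm_eq_abs]
    try ring
  set C2 : ℝ := ρ / (δ^k * (ρ^2 - ‖a‖^2)) with hC2
  have hC2pos : 0 < C2 := by
    rw [hC2]; positivity
  have hb1 : 2 * Real.pi * ‖c‖ ≤
      ∫ θ in (0:ℝ)..(2*Real.pi), 2 * (f (w θ)).re * (ρ / ‖w θ - a‖^(k+2)) := by
    rw [hnc, ← hsum]
    refine (intervalIntegral.norm_integral_le_integral_norm (by positivity)).trans_eq ?_
    refine intervalIntegral.integral_congr fun θ _ => ?_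
    rw [norm_mul, Complex.norm_real, Real.norm_eq_abs, abs_of_pos (by linarith [hreθ θ]),
      norm_div, norm_pow, hwnorm]
  have hb2 : (∫ θ in (0:ℝ)..(2*Real.pi), 2 * (f (w θ)).re * (ρ / ‖w θ - a‖^(k+2))) ≤
      ∫ θ in (0:ℝ)..(2*Real.pi), C2 * (2 * (f (w θ)).re * ((ρ^2 - ‖a‖^2) / ‖w θ - a‖^2)) := by
    have hi3 : IntervalIntegrable (fun θ => 2 * (f (w θ)).re * (ρ / ‖w θ - a‖^(k+2)))
        volume 0 (2*Real.pi) := by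
      refine Continuous.intervalIntegrable ?_ _ _
      refine (continuous_const.mul (Complex.continuous_re.comp hcf)).mul
        (continuous_const.div ((hcw.sub continuous_const).norm.pow _) fun θ =>
          pow_ne_zero _ (norm_ne_zero_iff.mpr (hwane θ)))
    have hi4 : IntervalIntegrable
        (fun θ => C2 * (2 * (f (w θ)).re * ((ρ^2 - ‖a‖^2) / ‖w θ - a‖^2))) volume 0 (2*Real.pi) := by
      refine Continuous.intervalIntegrable ?_ _ _
      exact continuous_const.mul ((continuous_const.mul (Complex.continuous_re.comp hcf)).mul hPcont)
    refine intervalIntegral.integral_mono_on (by positivity) hi3 hi4 fun θ _ => ?_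
    have habs : (0:ℝ) < ‖w θ - a‖ := lt_of_lt_of_le hδ0 (hwsub θ)
    have h1 : δ^k * ‖w θ - a‖^2 ≤ ‖w θ - a‖^(k+2) := by
      have : ‖w θ - a‖^(k+2) = ‖w θ - a‖^k * ‖w θ - a‖^2 := by ring
      rw [this]
      exact mul_le_mul_of_nonneg_right (pow_le_pow_left₀ hδ0.le (hwsub θ) k) (by positivity)
    have h2 : ρ / ‖w θ - a‖^(k+2) ≤ ρ / (δ^k * ‖w θ - a‖^2) :=
      div_le_div_of_nonneg_left hρ0.le (mul_pos (pow_pos hδ0 k) (pow_pos habs 2)) h1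
    have h3 : ρ / (δ^k * ‖w θ - a‖^2) = C2 * ((ρ^2 - ‖a‖^2) / ‖w θ - a‖^2) := by
      rw [hC2, div_mul_div_comm, div_eq_div_iff
        (mul_ne_zero (pow_ne_zero _ hδ0.ne') (pow_ne_zero _ habs.ne'))
        (mul_ne_zero (mul_ne_zero (pow_ne_zero _ hδ0.ne') hρa2.ne') (pow_ne_zero _ habs.ne'))]
      ring
    calc 2 * (f (w θ)).re * (ρ / ‖w θ - a‖^(k+2))
        ≤ 2 * (f (w θ)).re * (ρ / (δ^k * ‖w θ - a‖^2)) :=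
          mul_le_mul_of_nonneg_left h2 (by linarith [hreθ θ])
      _ = C2 * (2 * (f (w θ)).re * ((ρ^2 - ‖a‖^2) / ‖w θ - a‖^2)) := by rw [h3]; ring
  have hb3 : (∫ θ in (0:ℝ)..(2*Real.pi), C2 * (2 * (f (w θ)).re * ((ρ^2 - ‖a‖^2) / ‖w θ - a‖^2))) =
      C2 * 2 * (2 * Real.pi * (f a).re) := by
    rw [← hCre]
    rw [show (fun θ => C2 * (2 * (f (w θ)).re * ((ρ^2 - ‖a‖^2) / ‖w θ - a‖^2))) =
        (fun θ => (C2 * 2) * ((f (w θ)).re * ((ρ^2 - ‖a‖^2) / ‖w θ - a‖^2))) from funext fun θ => by ring]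
    rw [intervalIntegral.integral_const_mul]
    try ring
  have hfinal : 2 * Real.pi * ‖c‖ ≤ 2 * Real.pi * (2 * ρ / ((ρ + ‖a‖) * δ^(k+1)) * (f a).re) := by
    have heq : C2 * 2 * (2 * Real.pi * (f a).re) =
        2 * Real.pi * (2 * ρ / ((ρ + ‖a‖) * δ^(k+1)) * (f a).re) := by
      rw [hC2, show ρ^2 - ‖a‖^2 = δ * (ρ + ‖a‖) by rw [hδ]; ring]
      have hρa : (0:ℝ) < ρ + ‖a‖ := by positivity
      field_simp
      ring
    rw [← heq]
    exact hb1.trans (hb2.trans_eq hb3)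
  have h10 : (0:ℝ) < 2 * Real.pi := by positivity
  exact le_of_mul_le_mul_left hfinal h10

theorem stmt12 (R r : ℝ) (f : ℂ → ℂ) (a : ℂ)
    (hR : 0 < R) (haR : a ∈ ball (0:ℂ) R)
    (hf : DifferentiableOn ℂ f (ball 0 R))
    (hpos : ∀ w ∈ ball (0:ℂ) R, 0 < (f w).re)
    (d : ℝ) (hd : d = R - ‖a‖)
    (z : ℂ) (hz : ‖z - a‖ = r) (hrd : r < d) :
    (∑' k : ℕ, ‖(iteratedDeriv (k + 1) f a / (k + 1).factorial) * (z - a) ^ (k + 1)‖) ≤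
      2 * R * r / ((2 * R - d) * (d - r)) * (f a).re := by
  subst hd
  have haR' : ‖a‖ < R := mem_ball_zero_iff.mp haR
  have hr0 : 0 ≤ r := hz ▸ norm_nonneg _
  have hre0 : 0 < (f a).re := hpos a haR
  have harR : ‖a‖ + r < R := by linarith
  set S := ∑' k : ℕ, ‖(iteratedDeriv (k + 1) f a / ((k + 1).factorial : ℂ)) * (z - a) ^ (k + 1)‖
    with hS
  have key : ∀ ρ ∈ Set.Ioo (‖a‖ + r) R,
      S ≤ 2 * ρ * r / ((ρ + ‖a‖) * (ρ - ‖a‖ - r)) * (f a).re := by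
    rintro ρ ⟨hρ1, hρ2⟩
    have haρ : ‖a‖ < ρ := lt_of_le_of_lt (le_add_of_nonneg_right hr0) hρ1
    have hρ0 : 0 < ρ := (norm_nonneg a).trans_lt haρ
    set δ : ℝ := ρ - ‖a‖ with hδ
    have hδ0 : 0 < δ := sub_pos.mpr haρ
    have hδr : r < δ := by rw [hδ]; linarith
    have hρa : (0:ℝ) < ρ + ‖a‖ := by positivity
    have hq0 : 0 ≤ r / δ := by positivity
    have hq1 : r / δ < 1 := (div_lt_one hδ0).mpr hδr
    set C : ℝ := 2 * ρ / (ρ + ‖a‖) * (f a).re with hC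
    have hC0 : 0 ≤ C := by rw [hC]; positivity
    have hterm : ∀ k : ℕ,
        ‖(iteratedDeriv (k + 1) f a / ((k + 1).factorial : ℂ)) * (z - a) ^ (k + 1)‖ ≤
          (C * (r / δ)) * (r / δ) ^ k := by
      intro k
      rw [norm_mul, norm_pow, hz]
      have h1 := coeff_est hρ2 haρ hf hpos k
      calc ‖iteratedDeriv (k + 1) f a / ((k + 1).factorial : ℂ)‖ * r ^ (k + 1)
          ≤ (2 * ρ / ((ρ + ‖a‖) * δ ^ (k + 1)) * (f a).re) * r ^ (k + 1) :=
            mul_le_mul_of_nonneg_right h1 (by positivity)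
        _ = (C * (r / δ)) * (r / δ) ^ k := by
            rw [hC, show ((2 * ρ / (ρ + ‖a‖) * (f a).re) * (r / δ)) * (r / δ) ^ k =
              (2 * ρ / (ρ + ‖a‖) * (f a).re) * (r / δ) ^ (k + 1) by ring, div_pow]
            field_simp
            try ring
    have hsummable : Summable (fun k : ℕ => (C * (r / δ)) * (r / δ) ^ k) :=
      (summable_geometric_of_lt_one hq0 hq1).mul_left _
    have hS_le : S ≤ ∑' k : ℕ, (C * (r / δ)) * (r / δ) ^ k := by
      rw [hS]
      exact Summable.tsum_le_tsum hterm
        (Summable.of_nonneg_of_le (fun k => norm_nonneg _) hterm hsummable) hsummable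
    rw [tsum_mul_left, tsum_geometric_of_lt_one hq0 hq1] at hS_le
    refine hS_le.trans_eq ?_
    have h1mq : 0 < 1 - r / δ := by linarith
    have hδr' : (0:ℝ) < δ - r := by linarith
    rw [hC]
    rw [show ρ - ‖a‖ - r = δ - r from by rw [hδ]]
    field_simp
  set G : ℝ → ℝ := fun ρ => 2 * ρ * r / ((ρ + ‖a‖) * (ρ - ‖a‖ - r)) * (f a).re with hG
  have hden : ((R + ‖a‖) * (R - ‖a‖ - r)) ≠ 0 := by
    have h1 : (0:ℝ) < R - ‖a‖ - r := by linarith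
    have h2 : (0:ℝ) < R + ‖a‖ := by positivity
    positivity
  have hcont : ContinuousAt G R := by
    rw [hG]
    exact (((continuousAt_const.mul continuousAt_id).mul continuousAt_const).div
      (((continuousAt_id.add continuousAt_const)).mul
        ((continuousAt_id.sub continuousAt_const).sub continuousAt_const)) hden).mul
      continuousAt_const
  have htend : Filter.Tendsto G (nhdsWithin R (Set.Iio R)) (nhds (G R)) :=
    hcont.tendsto.mono_left nhdsWithin_le_nhds
  have hev : ∀ᶠ ρ in nhdsWithin R (Set.Iio R), S ≤ G ρ :=
    Filter.eventually_of_mem (Ioo_mem_nhdsLT_of_mem ⟨harR, le_refl R⟩) key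
  have hfin := ge_of_tendsto htend hev
  refine hfin.trans_eq ?_
  rw [hG]
  rw [show 2 * R - (R - ‖a‖) = R + ‖a‖ from by ring, show R - ‖a‖ - r = R - ‖a‖ - r from rfl]
end

section
/- Let f be holomorphic on D_R with Re f > 0 on D_R. Then for every n ≥ 0 and every z with |z| = r < R, |f^{(n)}(z) - f^{(n)}(0)| ≤ (2 n! (R^{n+1} - (R - r)^{n+1})) / ((R - r)^{n+1} R^n) · Re f(0). -/
open Complex Metric intervalIntegral

private lemma kmIiconj (g : ℝ → ℂ) (a b : ℝ) :
    ∫ θ in a..b, (starRingEnd ℂ) (g θ) = (starRingEnd ℂ) (∫ θ in a..b, g θ) := by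
  rw [intervalIntegral, intervalIntegral, integral_conj, integral_conj, map_sub]

private lemma kmIire {g : ℝ → ℂ} {a b : ℝ} (hg : Continuous g) :
    (∫ θ in a..b, (g θ).re) = (∫ θ in a..b, g θ).re := by
  rw [intervalIntegral, intervalIntegral]
  simp only [← RCLike.re_to_complex]
  rw [integral_re hg.integrableOn_Ioc, integral_re hg.integrableOn_Ioc, map_sub]

private lemma kmUnfoldCI {s : ℝ} (g : ℂ → ℂ) :
    (∮ z in C(0, s), g z) = I * ∫ θ in (0:ℝ)..(2*Real.pi), circleMap 0 s θ * g (circleMap 0 s θ) := by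
  rw [circleIntegral, ← intervalIntegral.integral_const_mul]
  refine intervalIntegral.integral_congr fun θ _ => ?_
  simp [deriv_circleMap]
  ring

private lemma kmCoeffEq {g : ℂ → ℂ} {p : FormalMultilinearSeries ℂ ℂ ℂ} {x : ℂ} {ρ : ENNReal}
    (h : HasFPowerSeriesOnBall g p x ρ) (k : ℕ) :
    (k.factorial : ℂ) * p.coeff k = iteratedDeriv k g x := by
  have h2 := h.factorial_smul (1 : ℂ) k
  rw [iteratedDeriv_eq_iteratedFDeriv, ← h2, FormalMultilinearSeries.coeff, nsmul_eq_mul]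
  norm_num [Pi.one_def]

private lemma kmItit (f : ℂ → ℂ) (j n : ℕ) :
    iteratedDeriv j (iteratedDeriv n f) = iteratedDeriv (j + n) f := by
  induction j with
  | zero => simp
  | succ j ih => rw [iteratedDeriv_succ, ih, ← iteratedDeriv_succ]; ring_nf

private lemma kmHasSumRep {g : ℂ → ℂ} {s : ℝ} (hs : 0 < s)
    (hg : DifferentiableOn ℂ g (closedBall 0 s)) {w : ℂ} (hw : ‖w‖ < s) :
    HasSum (fun j => (cauchyPowerSeries g 0 s).coeff j * w ^ j) (g w) := by
  lift s to NNReal using hs.le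
  have h := hg.hasFPowerSeriesOnBall (by exact_mod_cast hs)
  have hw' : w ∈ Metric.eball (0 : ℂ) s := by
    simp [edist_zero_right, ← NNReal.coe_lt_coe]
    exact_mod_cast hw
  have := h.hasSum hw'
  simp only [FormalMultilinearSeries.apply_eq_pow_smul_coeff, smul_eq_mul, zero_add] at this
  simpa [mul_comm] using this

private lemma kmCoeffBound {f : ℂ → ℂ} {s : ℝ} (hs : 0 < s)
    (hd : DifferentiableOn ℂ f (closedBall 0 s))
    (hre : ∀ w ∈ closedBall (0:ℂ) s, 0 ≤ (f w).re) {k : ℕ} (hk : 1 ≤ k) :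
    ‖(cauchyPowerSeries f 0 s).coeff k‖ * s ^ k ≤ 2 * (f 0).re := by
  have hu : ∀ θ : ℝ, circleMap 0 s θ ≠ 0 := fun θ => circleMap_ne_center hs.ne'
  have habs : ∀ θ : ℝ, ‖circleMap 0 s θ‖ = s := fun θ => by
    rw [norm_circleMap_zero, abs_of_pos hs]
  have hmem : ∀ θ : ℝ, circleMap 0 s θ ∈ closedBall (0:ℂ) s := fun θ => by
    simp [Complex.dist_eq, habs θ]
  have hfc : Continuous fun θ : ℝ => f (circleMap 0 s θ) :=
    hd.continuousOn.comp_continuous (continuous_circleMap 0 s) hmem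
  have hcpow : ∀ m : ℕ, Continuous fun θ : ℝ => (circleMap 0 s θ)⁻¹ ^ m := fun m =>
    (((continuous_circleMap 0 s).inv₀ hu).pow m)
  -- coefficient formula
  have key : ∀ m : ℕ,
      (∫ θ in (0:ℝ)..(2*Real.pi), (circleMap 0 s θ)⁻¹ ^ m * f (circleMap 0 s θ))
        = (2*Real.pi : ℝ) * (cauchyPowerSeries f 0 s).coeff m := by
    intro m
    have h1 : (cauchyPowerSeries f 0 s).coeff m
        = (2 * ↑Real.pi * I)⁻¹ • ∮ z in C(0, s), (1 / (z - 0)) ^ m • (z - 0)⁻¹ • f z :=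
      cauchyPowerSeries_apply f 0 s m 1
    rw [h1, kmUnfoldCI, smul_eq_mul]
    have h2 : ∀ θ : ℝ, circleMap 0 s θ *
        ((1 / (circleMap 0 s θ - 0)) ^ m • ((circleMap 0 s θ - 0)⁻¹ • f (circleMap 0 s θ)))
        = (circleMap 0 s θ)⁻¹ ^ m * f (circleMap 0 s θ) := by
      intro θ
      have h0 := hu θ
      simp only [sub_zero, smul_eq_mul, one_div]
      field_simp
    rw [intervalIntegral.integral_congr (g := fun θ =>
      (circleMap 0 s θ)⁻¹ ^ m * f (circleMap 0 s θ)) (fun θ _ => h2 θ)]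
    have hπ : (2 * (Real.pi:ℂ) * I) ≠ 0 := by
      simp [Real.pi_ne_zero, I_ne_zero]
    field_simp
    push_cast
    ring
  obtain ⟨m, rfl⟩ := Nat.exists_eq_add_of_le hk
  -- vanishing of positive-power integrals
  have hvan : ∫ θ in (0:ℝ)..(2*Real.pi),
      (circleMap 0 s θ) ^ (1+m) * f (circleMap 0 s θ) = 0 := by
    have hz : (∮ z in C(0, s), z ^ m * f z) = 0 := by
      apply Complex.circleIntegral_eq_zero_of_differentiable_on_off_countable hs.le
        Set.countable_empty
      · exact (continuous_pow m).continuousOn.mul hd.continuousOn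
      · intro z hz
        have hz' : z ∈ ball (0:ℂ) s := hz.1
        exact (differentiableAt_pow m).mul
          (hd.differentiableAt (Filter.mem_of_superset (isOpen_ball.mem_nhds hz')
            ball_subset_closedBall))
    rw [kmUnfoldCI] at hz
    have h4 : ∫ θ in (0:ℝ)..(2*Real.pi),
        circleMap 0 s θ * ((circleMap 0 s θ)^m * f (circleMap 0 s θ)) = 0 := by
      rcases mul_eq_zero.1 hz with h | h
      · exact absurd h I_ne_zero
      · exact h
    refine Eq.trans ?_ h4
    refine intervalIntegral.integral_congr fun θ _ => ?_
    rw [pow_add, pow_one]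
    ring
  -- conjugate vanishing
  have hconj : ∀ θ : ℝ, (starRingEnd ℂ) (circleMap 0 s θ) = (s:ℂ)^2 * (circleMap 0 s θ)⁻¹ := by
    intro θ
    have h5 : circleMap 0 s θ * (starRingEnd ℂ) (circleMap 0 s θ) = ((s:ℝ)^2 : ℂ) := by
      rw [Complex.mul_conj]
      norm_cast
      rw [Complex.normSq_eq_norm_sq, habs θ]
    have h0 := hu θ
    field_simp
    linear_combination h5
  have hA' : ∫ θ in (0:ℝ)..(2*Real.pi),
      (circleMap 0 s θ)⁻¹ ^ (1+m) * (starRingEnd ℂ) (f (circleMap 0 s θ)) = 0 := by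
    have h6 := congrArg (starRingEnd ℂ) hvan
    rw [← kmIiconj, map_zero] at h6
    have h7 : ∀ θ:ℝ, (starRingEnd ℂ) ((circleMap 0 s θ)^(1+m) * f (circleMap 0 s θ))
        = ((s:ℂ)^2)^(1+m) *
          ((circleMap 0 s θ)⁻¹ ^ (1+m) * (starRingEnd ℂ) (f (circleMap 0 s θ))) := by
      intro θ
      rw [map_mul, map_pow, hconj θ, mul_pow]
      ring
    rw [intervalIntegral.integral_congr (fun θ _ => h7 θ),
      intervalIntegral.integral_const_mul] at h6
    have h8 : ((s:ℂ)^2)^(1+m) ≠ 0 := by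
      apply pow_ne_zero
      apply pow_ne_zero
      exact_mod_cast hs.ne'
    exact (mul_eq_zero.1 h6).resolve_left h8
  -- mean value
  have hps := DifferentiableOn.hasFPowerSeriesOnBall (R := ⟨s, hs.le⟩) hd (by exact_mod_cast hs)
  have hmean : ∫ θ in (0:ℝ)..(2*Real.pi), f (circleMap 0 s θ) = (2*Real.pi : ℝ) * f 0 := by
    have h9 := key 0
    simp only [pow_zero, one_mul] at h9
    rw [h9]
    congr 1
    exact hps.coeff_zero fun _ => 1
  -- identity for coefficient in terms of Re f
  have hfc2 : Continuous fun θ : ℝ => (starRingEnd ℂ) (f (circleMap 0 s θ)) :=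
    Complex.continuous_conj.comp hfc
  have hi1 : IntervalIntegrable
      (fun θ => (circleMap 0 s θ)⁻¹^(1+m) * f (circleMap 0 s θ))
      MeasureTheory.volume 0 (2*Real.pi) := ((hcpow _).mul hfc).intervalIntegrable _ _
  have hi2 : IntervalIntegrable
      (fun θ => (circleMap 0 s θ)⁻¹^(1+m) * (starRingEnd ℂ) (f (circleMap 0 s θ)))
      MeasureTheory.volume 0 (2*Real.pi) := ((hcpow _).mul hfc2).intervalIntegrable _ _
  have hAval : ((2*Real.pi:ℝ):ℂ) * (cauchyPowerSeries f 0 s).coeff (1+m)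
      = ∫ θ in (0:ℝ)..(2*Real.pi),
        (circleMap 0 s θ)⁻¹^(1+m) * (2 * ((f (circleMap 0 s θ)).re : ℂ)) := by
    rw [← key (1+m)]
    have h10 : (∫ θ in (0:ℝ)..(2*Real.pi),
        (circleMap 0 s θ)⁻¹^(1+m) * (2 * ((f (circleMap 0 s θ)).re : ℂ)))
        = (∫ θ in (0:ℝ)..(2*Real.pi), (circleMap 0 s θ)⁻¹^(1+m) * f (circleMap 0 s θ))
          + ∫ θ in (0:ℝ)..(2*Real.pi),
            (circleMap 0 s θ)⁻¹^(1+m) * (starRingEnd ℂ) (f (circleMap 0 s θ)) := by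
      rw [← intervalIntegral.integral_add hi1 hi2]
      refine intervalIntegral.integral_congr fun θ _ => ?_
      rw [← mul_add, Complex.add_conj]
      push_cast
      ring
    rw [h10, hA', add_zero]
  -- norm estimate
  have hπ : (0:ℝ) < 2*Real.pi := Real.two_pi_pos
  have hb1 : ‖((2*Real.pi:ℝ):ℂ) * (cauchyPowerSeries f 0 s).coeff (1+m)‖
      ≤ s⁻¹^(1+m) * 2 * ((2*Real.pi) * (f 0).re) := by
    rw [hAval]
    calc ‖∫ θ in (0:ℝ)..(2*Real.pi),
          (circleMap 0 s θ)⁻¹^(1+m) * (2 * ((f (circleMap 0 s θ)).re : ℂ))‖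
        ≤ ∫ θ in (0:ℝ)..(2*Real.pi),
          ‖(circleMap 0 s θ)⁻¹^(1+m) * (2 * ((f (circleMap 0 s θ)).re : ℂ))‖ :=
          intervalIntegral.norm_integral_le_integral_norm hπ.le
      _ = ∫ θ in (0:ℝ)..(2*Real.pi), s⁻¹^(1+m) * 2 * (f (circleMap 0 s θ)).re := by
          refine intervalIntegral.integral_congr fun θ _ => ?_
          rw [norm_mul, norm_pow, norm_inv, norm_mul]
          simp only [habs θ, Complex.norm_real, Real.norm_eq_abs, Complex.norm_two]
          rw [_root_.abs_of_nonneg (hre _ (hmem θ))]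
          ring
      _ = s⁻¹^(1+m) * 2 * ∫ θ in (0:ℝ)..(2*Real.pi), (f (circleMap 0 s θ)).re := by
          rw [intervalIntegral.integral_const_mul]
      _ = s⁻¹^(1+m) * 2 * ((2*Real.pi) * (f 0).re) := by
          rw [kmIire hfc, hmean]
          simp
  have hnorm2 : 2*Real.pi * ‖(cauchyPowerSeries f 0 s).coeff (1+m)‖
      ≤ s⁻¹^(1+m) * 2 * ((2*Real.pi) * (f 0).re) := by
    have : ‖((2*Real.pi:ℝ):ℂ)‖ = 2*Real.pi := by
      rw [Complex.norm_real, Real.norm_eq_abs, abs_of_pos hπ]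
    rw [norm_mul, this] at hb1
    exact hb1
  have hfin : ‖(cauchyPowerSeries f 0 s).coeff (1+m)‖ ≤ s⁻¹^(1+m) * (2 * (f 0).re) := by
    nlinarith [hnorm2, hπ]
  calc ‖(cauchyPowerSeries f 0 s).coeff (1+m)‖ * s^(1+m)
      ≤ (s⁻¹^(1+m) * (2 * (f 0).re)) * s^(1+m) :=
        mul_le_mul_of_nonneg_right hfin (pow_nonneg hs.le _)
    _ = 2 * (f 0).re := by
        rw [inv_pow, mul_comm, ← mul_assoc, mul_inv_cancel₀ (pow_ne_zero _ hs.ne'), one_mul]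

private lemma kmGeomBinomBound (n : ℕ) {x : ℝ} (hx0 : 0 ≤ x) (hx1 : x < 1) :
    ∀ J, ∑ i ∈ Finset.range J, ((n+i).choose n : ℝ) * x^i ≤ (1-x)⁻¹^(n+1) := by
  have h1x : 0 < 1 - x := by linarith
  induction n with
  | zero =>
    intro J
    simp only [Nat.zero_add, Nat.choose_zero_right, Nat.cast_one, one_mul, zero_add, pow_one]
    nlinarith [geom_sum_mul x J, pow_nonneg hx0 J, mul_inv_cancel₀ h1x.ne', inv_pos.2 h1x]
  | succ n ih =>
    intro J
    have hmono : ∀ J J', J ≤ J' → ∑ i ∈ Finset.range J, ((n+1+i).choose (n+1) : ℝ) * x^i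
        ≤ ∑ i ∈ Finset.range J', ((n+1+i).choose (n+1) : ℝ) * x^i := by
      intro J J' hJ
      apply Finset.sum_le_sum_of_subset_of_nonneg (Finset.range_subset_range.2 hJ)
      intro i _ _
      positivity
    have hTbound : ∀ J, ∑ i ∈ Finset.range J, ((n+i).choose (n+1) : ℝ) * x^i
        ≤ x * ∑ i ∈ Finset.range J, ((n+1+i).choose (n+1) : ℝ) * x^i := by
      intro J
      cases J with
      | zero => simp
      | succ J =>
        rw [Finset.sum_range_succ']
        have h0 : ((n+0).choose (n+1) : ℝ) * x^0 = 0 := by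
          simp [Nat.choose_eq_zero_of_lt (Nat.lt_succ_self n)]
        rw [h0, add_zero]
        have heq : ∀ i, ((n+(i+1)).choose (n+1) : ℝ) * x^(i+1)
            = x * (((n+1+i).choose (n+1) : ℝ) * x^i) := by
          intro i
          have h2 : n+(i+1) = n+1+i := by ring
          rw [h2]
          ring
        rw [Finset.sum_congr rfl (fun i _ => heq i), ← Finset.mul_sum]
        exact mul_le_mul_of_nonneg_left (hmono J (J+1) (Nat.le_succ J)) hx0
    have hsplit : ∀ i : ℕ, ((n+1+i).choose (n+1) : ℝ) * x^i
        = ((n+i).choose n : ℝ) * x^i + ((n+i).choose (n+1) : ℝ) * x^i := by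
      intro i
      have h3 : n+1+i = (n+i)+1 := by ring
      rw [h3, Nat.choose_succ_succ]
      push_cast
      ring
    have hkey : ∑ i ∈ Finset.range J, ((n+1+i).choose (n+1) : ℝ) * x^i
        ≤ ∑ i ∈ Finset.range J, ((n+i).choose n : ℝ) * x^i
          + x * ∑ i ∈ Finset.range J, ((n+1+i).choose (n+1) : ℝ) * x^i := by
      calc ∑ i ∈ Finset.range J, ((n+1+i).choose (n+1) : ℝ) * x^i
          = ∑ i ∈ Finset.range J, (((n+i).choose n : ℝ) * x^i + ((n+i).choose (n+1) : ℝ) * x^i) :=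
            Finset.sum_congr rfl (fun i _ => hsplit i)
        _ = ∑ i ∈ Finset.range J, ((n+i).choose n : ℝ) * x^i
            + ∑ i ∈ Finset.range J, ((n+i).choose (n+1) : ℝ) * x^i := Finset.sum_add_distrib
        _ ≤ _ := by have := hTbound J; linarith
    have hIH := ih J
    have hS : (1-x) * (∑ i ∈ Finset.range J, ((n+1+i).choose (n+1) : ℝ) * x^i)
        ≤ (1-x)⁻¹^(n+1) := by nlinarith
    have h2 := mul_le_mul_of_nonneg_left hS (le_of_lt (inv_pos.2 h1x))
    rw [← mul_assoc, inv_mul_cancel₀ h1x.ne', one_mul] at h2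
    rw [pow_succ]
    linarith [h2]

theorem stmt14 (R r : ℝ) (f : ℂ → ℂ)
    (hR : 0 < R) (hr : 0 ≤ r) (h3 : r < R)
    (hf : DifferentiableOn ℂ f (ball 0 R))
    (hpos : ∀ w ∈ ball (0:ℂ) R, 0 < (f w).re)
    (z : ℂ) (hz : ‖z‖ = r) (n : ℕ) :
    ‖iteratedDeriv n f z - iteratedDeriv n f 0‖ ≤
      2 * n.factorial * (R ^ (n + 1) - (R - r) ^ (n + 1)) / ((R - r) ^ (n + 1) * R ^ n) *
        (f 0).re := by
  set c : ℝ := (f 0).re with hc_def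
  have hc : 0 < c := hpos 0 (mem_ball_self hR)
  -- derivative bounds at the origin
  have hD : ∀ k : ℕ, 1 ≤ k → ‖iteratedDeriv k f 0‖ * R^k ≤ (k.factorial:ℝ) * (2*c) := by
    intro k hk
    have hev : ∀ s ∈ Set.Ioo (0:ℝ) R, ‖iteratedDeriv k f 0‖ * s^k ≤ (k.factorial:ℝ) * (2*c) := by
      intro s hsIoo
      have hsub : closedBall (0:ℂ) s ⊆ ball 0 R := by
        intro w hw
        rw [mem_closedBall, Complex.dist_eq, sub_zero] at hw
        rw [mem_ball, Complex.dist_eq, sub_zero]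
        exact lt_of_le_of_lt hw hsIoo.2
      have hdcb : DifferentiableOn ℂ f (closedBall 0 s) := hf.mono hsub
      have hps := DifferentiableOn.hasFPowerSeriesOnBall (R := ⟨s, hsIoo.1.le⟩) hdcb
        (by exact_mod_cast hsIoo.1)
      have hce : (k.factorial : ℂ) * (cauchyPowerSeries f 0 s).coeff k
          = iteratedDeriv k f 0 := kmCoeffEq hps k
      have hcb := kmCoeffBound hsIoo.1 hdcb (fun w hw => (hpos w (hsub hw)).le) hk
      have hnormeq : ‖iteratedDeriv k f 0‖
          = (k.factorial:ℝ) * ‖(cauchyPowerSeries f 0 s).coeff k‖ := by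
        rw [← hce, norm_mul]
        norm_num
      rw [hnormeq, mul_assoc]
      exact mul_le_mul_of_nonneg_left hcb (by positivity)
    have htend : Filter.Tendsto (fun s : ℝ => ‖iteratedDeriv k f 0‖ * s^k)
        (nhdsWithin R (Set.Iio R)) (nhds (‖iteratedDeriv k f 0‖ * R^k)) :=
      ((continuous_const.mul (continuous_pow k)).tendsto R).mono_left nhdsWithin_le_nhds
    refine le_of_tendsto htend ?_
    filter_upwards [Ioo_mem_nhdsLT_of_mem (Set.mem_Ioc.2 ⟨hR, le_refl R⟩)] with s hs
    exact hev s hs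
  -- analyticity of iterated derivatives
  have han : ∀ m : ℕ, AnalyticOnNhd ℂ (iteratedDeriv m f) (ball (0:ℂ) R) := by
    intro m
    induction m with
    | zero => simpa using hf.analyticOnNhd isOpen_ball
    | succ m ih => rw [iteratedDeriv_succ]; exact ih.deriv
  -- choose intermediate radius
  obtain ⟨s, hs1, hs2⟩ : ∃ s, r < s ∧ s < R := exists_between h3
  have hs0 : 0 < s := lt_of_le_of_lt hr hs1
  have hsub : closedBall (0:ℂ) s ⊆ ball 0 R := by
    intro w hw
    rw [mem_closedBall, Complex.dist_eq, sub_zero] at hw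
    rw [mem_ball, Complex.dist_eq, sub_zero]
    exact lt_of_le_of_lt hw hs2
  have hgd : DifferentiableOn ℂ (iteratedDeriv n f) (closedBall 0 s) :=
    ((han n).differentiableOn).mono hsub
  set q := cauchyPowerSeries (iteratedDeriv n f) 0 s with hq_def
  have hrep : HasSum (fun j => q.coeff j * z^j) (iteratedDeriv n f z) :=
    kmHasSumRep hs0 hgd (by rw [hz]; exact hs1)
  have hpsg := DifferentiableOn.hasFPowerSeriesOnBall (R := ⟨s, hs0.le⟩) hgd
    (by exact_mod_cast hs0)
  have hqco : ∀ j : ℕ, (j.factorial : ℂ) * q.coeff j = iteratedDeriv (j+n) f 0 := by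
    intro j
    have := kmCoeffEq hpsg j
    rwa [congrFun (kmItit f j n) 0] at this
  have hq0 : q.coeff 0 = iteratedDeriv n f 0 := by
    have := hqco 0
    simpa using this
  have hshift : HasSum (fun j => q.coeff (j+1) * z^(j+1))
      (iteratedDeriv n f z - iteratedDeriv n f 0) := by
    have h := (hasSum_nat_add_iff' (f := fun j => q.coeff j * z^j) 1).mpr hrep
    simpa [hq0] using h
  -- pointwise bound on the shifted coefficients
  set M : ℕ → ℝ := fun j =>
    (n.factorial : ℝ) * ((n+(j+1)).choose n : ℝ) * (2*c) * r^(j+1) / R^(n+(j+1)) with hM_def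
  have hterm : ∀ j : ℕ, ‖q.coeff (j+1) * z^(j+1)‖ ≤ M j := by
    intro j
    have hfac : ((j+1).factorial:ℝ) * ‖q.coeff (j+1)‖ = ‖iteratedDeriv ((j+1)+n) f 0‖ := by
      rw [← hqco (j+1), norm_mul]
      norm_num
    have h2 := hD ((j+1)+n) (by omega)
    rw [show (j+1)+n = n+(j+1) from by omega] at h2 hfac
    have h3 : ((n+(j+1)).factorial : ℝ)
        = ((n+(j+1)).choose n : ℝ) * (n.factorial:ℝ) * ((j+1).factorial:ℝ) := by
      have h3' := Nat.add_choose_mul_factorial_mul_factorial (j+1) n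
      rw [Nat.add_comm (j+1) n] at h3'
      push_cast [← h3']
      ring
    have hRp : (0:ℝ) < R^(n+(j+1)) := pow_pos hR _
    have hfp : (0:ℝ) < ((j+1).factorial:ℝ) := by exact_mod_cast (j+1).factorial_pos
    have hrp : (0:ℝ) ≤ r^(j+1) := pow_nonneg hr _
    rw [norm_mul, norm_pow, hz]
    simp only [hM_def]
    rw [div_eq_mul_inv]
    -- reduce to: ‖coeff‖ ≤ n! * choose * 2c / R^p
    have hcoefb : ‖q.coeff (j+1)‖
        ≤ (n.factorial : ℝ) * ((n+(j+1)).choose n : ℝ) * (2*c) / R^(n+(j+1)) := by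
      rw [le_div_iff₀ hRp]
      have h4 : (((j+1).factorial:ℝ) * ‖q.coeff (j+1)‖) * R^(n+(j+1))
          ≤ ((n+(j+1)).factorial : ℝ) * (2*c) := by rw [hfac]; exact h2
      nlinarith [h4, h3, hfp, norm_nonneg (q.coeff (j+1)), hRp]
    calc ‖q.coeff (j+1)‖ * r^(j+1)
        ≤ ((n.factorial : ℝ) * ((n+(j+1)).choose n : ℝ) * (2*c) / R^(n+(j+1))) * r^(j+1) :=
          mul_le_mul_of_nonneg_right hcoefb hrp
      _ = (n.factorial : ℝ) * ((n+(j+1)).choose n : ℝ) * (2*c) * r^(j+1) * (R^(n+(j+1)))⁻¹ := by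
          ring
  -- partial sums bound
  set B : ℝ := 2 * n.factorial * (R ^ (n + 1) - (R - r) ^ (n + 1)) /
      ((R - r) ^ (n + 1) * R ^ n) * c with hB_def
  have hRr : (0:ℝ) < R - r := by linarith
  have hx0 : (0:ℝ) ≤ r/R := by positivity
  have hx1 : r/R < 1 := (div_lt_one hR).2 h3
  have hpart : ∀ J : ℕ, ∑ j ∈ Finset.range J, M j ≤ B := by
    intro J
    have hMx : ∀ j : ℕ, M j = ((n.factorial:ℝ) * (2*c) / R^n)
        * (((n+(j+1)).choose n : ℝ) * (r/R)^(j+1)) := by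
      intro j
      simp only [hM_def]
      rw [pow_add R n (j+1), div_pow]
      field_simp
    rw [Finset.sum_congr rfl (fun j _ => hMx j), ← Finset.mul_sum]
    have hgb := kmGeomBinomBound n hx0 hx1 (J+1)
    rw [Finset.sum_range_succ'] at hgb
    simp only [Nat.add_zero, Nat.choose_self, Nat.cast_one, pow_zero, mul_one] at hgb
    have hgb2 : ∑ j ∈ Finset.range J, ((n+(j+1)).choose n : ℝ) * (r/R)^(j+1)
        ≤ (1-r/R)⁻¹^(n+1) - 1 := by linarith
    have hK : (0:ℝ) ≤ (n.factorial:ℝ) * (2*c) / R^n := by positivity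
    calc ((n.factorial:ℝ) * (2*c) / R^n)
          * ∑ j ∈ Finset.range J, ((n+(j+1)).choose n : ℝ) * (r/R)^(j+1)
        ≤ ((n.factorial:ℝ) * (2*c) / R^n) * ((1-r/R)⁻¹^(n+1) - 1) :=
          mul_le_mul_of_nonneg_left hgb2 hK
      _ = B := by
          rw [hB_def]
          have h1x : 1 - r/R = (R-r)/R := by field_simp
          rw [h1x, inv_div, div_pow]
          field_simp
  have hMnn : ∀ j, 0 ≤ M j := by
    intro j
    simp only [hM_def]
    positivity
  have hsumM : Summable M := summable_of_sum_range_le hMnn hpart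
  have hsumnorm : Summable (fun j => ‖q.coeff (j+1) * z^(j+1)‖) :=
    Summable.of_nonneg_of_le (fun _ => norm_nonneg _) hterm hsumM
  calc ‖iteratedDeriv n f z - iteratedDeriv n f 0‖
      = ‖∑' j : ℕ, q.coeff (j+1) * z^(j+1)‖ := by rw [hshift.tsum_eq]
    _ ≤ ∑' j : ℕ, ‖q.coeff (j+1) * z^(j+1)‖ := norm_tsum_le_tsum_norm hsumnorm
    _ ≤ ∑' j : ℕ, M j := Summable.tsum_le_tsum hterm hsumnorm hsumM
    _ ≤ B := Summable.tsum_le_of_sum_range_le hsumM hpart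
end

section
/- Let f be holomorphic on D_R with f(D_R) ⊆ G, where G ⊆ ℂ is a domain whose convex hull G̃ is not all of ℂ. Then for every n ≥ 0 and every z with |z| = r < R, |f^{(n)}(z) - f^{(n)}(0)| ≤ (2 n! (R^{n+1} - (R - r)^{n+1})) / ((R - r)^{n+1} R^n) · dist(f(0), ∂G̃). -/
open Complex Metric MeasureTheory
open scoped ENNReal NNReal

private lemma intInt_conj (F : ℝ → ℂ) (a b : ℝ) :
    (∫ x in a..b, (starRingEnd ℂ) (F x)) = (starRingEnd ℂ) (∫ x in a..b, F x) := by
  simp only [intervalIntegral, integral_conj, map_sub]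

private lemma circleInt_eq (F : ℂ → ℂ) (ρ : ℝ) :
    (∮ z in C(0, ρ), F z) =
      ∫ θ in (0:ℝ)..2 * Real.pi, circleMap 0 ρ θ * I * F (circleMap 0 ρ θ) := by
  simp only [circleIntegral, deriv_circleMap, smul_eq_mul, zero_add]

private lemma coeff_bound {ρ : ℝ} (hρ : 0 < ρ) {h : ℂ → ℂ} {d : ℝ}
    (hdiff : DifferentiableOn ℂ h (closedBall 0 ρ))
    (h0 : h 0 = 0) (hre : ∀ w ∈ closedBall (0:ℂ) ρ, (h w).re ≤ d)
    {k : ℕ} (hk : 1 ≤ k) :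
    ‖(cauchyPowerSeries h 0 ρ).coeff k‖ ≤ 2 * d / ρ ^ k := by
  obtain ⟨m, rfl⟩ : ∃ m, k = m + 1 := ⟨k - 1, (Nat.succ_pred_eq_of_pos hk).symm⟩
  have hek : ∀ θ : ℝ, circleMap 0 ρ θ ≠ 0 := fun θ => circleMap_ne_center hρ.ne'
  have hmem : ∀ θ : ℝ, circleMap 0 ρ θ ∈ closedBall (0:ℂ) ρ := fun θ =>
    circleMap_mem_closedBall 0 hρ.le θ
  have hcont : ContinuousOn h (closedBall 0 ρ) := hdiff.continuousOn
  have hce : Continuous fun θ : ℝ => h (circleMap 0 ρ θ) :=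
    hcont.comp_continuous (continuous_circleMap 0 ρ) hmem
  have hconjc : Continuous fun θ : ℝ => (starRingEnd ℂ) (circleMap 0 ρ θ) :=
    continuous_conj.comp (continuous_circleMap 0 ρ)
  have hconjh : Continuous fun θ : ℝ => (starRingEnd ℂ) (h (circleMap 0 ρ θ)) :=
    continuous_conj.comp hce
  have habs : ∀ θ : ℝ, ‖circleMap 0 ρ θ‖ = ρ := fun θ => by
    simpa [abs_of_pos hρ] using norm_circleMap_zero ρ θ
  have hdiffAt : ∀ z ∈ ball (0:ℂ) ρ, DifferentiableAt ℂ h z := fun z hz =>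
    hdiff.differentiableAt (Filter.mem_of_superset (isOpen_ball.mem_nhds hz)
      ball_subset_closedBall)
  -- (C) mean value zero
  have hC : (∫ θ in (0:ℝ)..2 * Real.pi, h (circleMap 0 ρ θ)) = 0 := by
    have h1 := circleIntegral_sub_center_inv_smul_of_differentiable_on_off_countable hρ
      Set.countable_empty hcont (fun z hz => hdiffAt z hz.1)
    rw [h0, smul_zero, circleInt_eq] at h1
    have h2 : ∀ θ : ℝ, circleMap 0 ρ θ * I * ((circleMap 0 ρ θ - 0)⁻¹ • h (circleMap 0 ρ θ))
        = I * h (circleMap 0 ρ θ) := by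
      intro θ
      have he := hek θ
      simp only [sub_zero, smul_eq_mul]
      field_simp
    simp only [h2] at h1
    rw [intervalIntegral.integral_const_mul] at h1
    simpa [I_ne_zero] using h1
  -- (B) positive powers integrate to zero
  have hB : (∫ θ in (0:ℝ)..2 * Real.pi,
      (circleMap 0 ρ θ) ^ (m + 1) * h (circleMap 0 ρ θ)) = 0 := by
    have h1 := circleIntegral_eq_zero_of_differentiable_on_off_countable
      (f := fun z => z ^ m * h z) hρ.le Set.countable_empty
      (((continuous_pow m).continuousOn).mul hcont)
      (fun z hz => (differentiableAt_pow m).mul (hdiffAt z hz.1))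
    rw [circleInt_eq] at h1
    have h2 : ∀ θ : ℝ, circleMap 0 ρ θ * I * ((circleMap 0 ρ θ) ^ m * h (circleMap 0 ρ θ))
        = I * ((circleMap 0 ρ θ) ^ (m + 1) * h (circleMap 0 ρ θ)) := by
      intro θ; ring
    simp only [h2] at h1
    rw [intervalIntegral.integral_const_mul] at h1
    simpa [I_ne_zero] using h1
  -- conj of (B)
  have hBc : (∫ θ in (0:ℝ)..2 * Real.pi,
      ((starRingEnd ℂ) (circleMap 0 ρ θ)) ^ (m + 1)
        * (starRingEnd ℂ) (h (circleMap 0 ρ θ))) = 0 := by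
    have := (intInt_conj (fun θ => (circleMap 0 ρ θ) ^ (m + 1) * h (circleMap 0 ρ θ))
      0 (2 * Real.pi)).trans (by rw [hB, map_zero])
    simpa [map_mul, map_pow] using this
  -- (D)
  have hD : (∫ θ in (0:ℝ)..2 * Real.pi, ((starRingEnd ℂ) (circleMap 0 ρ θ)) ^ (m + 1)) = 0 := by
    have hpt : ∀ θ : ℝ, ((starRingEnd ℂ) (circleMap 0 ρ θ)) ^ (m + 1)
        = (ρ : ℂ) ^ (m + 1) * Complex.exp ((-(m + 1 : ℂ) * I) * θ) := by
      intro θ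
      rw [circleMap_zero, map_mul, conj_ofReal, ← Complex.exp_conj]
      have : (starRingEnd ℂ) (θ * I) = -(θ * I) := by
        simp [map_mul, conj_ofReal, conj_I]
      rw [this, mul_pow, ← Complex.exp_nat_mul]
      congr 1
      push_cast
      ring
    simp only [hpt]
    rw [intervalIntegral.integral_const_mul]
    have hc0 : (-(m + 1 : ℂ) * I) ≠ 0 :=
      mul_ne_zero (neg_ne_zero.mpr (Nat.cast_add_one_ne_zero m)) I_ne_zero
    rw [integral_exp_mul_complex hc0]
    have h2 : (-(m + 1 : ℂ) * I) * (2 * Real.pi : ℝ) = ((-(m + 1) : ℤ) : ℂ) * (2 * Real.pi * I) := by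
      push_cast; ring
    rw [h2, Complex.exp_int_mul_two_pi_mul_I]
    simp
  -- real part integral zero
  have hre0 : (∫ θ in (0:ℝ)..2 * Real.pi, (h (circleMap 0 ρ θ)).re) = 0 := by
    have h1 : ((∫ θ in (0:ℝ)..2 * Real.pi, (h (circleMap 0 ρ θ)).re : ℝ) : ℂ)
        = ∫ θ in (0:ℝ)..2 * Real.pi, ((h (circleMap 0 ρ θ)).re : ℂ) :=
      (intervalIntegral.integral_ofReal).symm
    have h2 : ∀ θ : ℝ, (((h (circleMap 0 ρ θ)).re : ℝ) : ℂ)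
        = (h (circleMap 0 ρ θ) + (starRingEnd ℂ) (h (circleMap 0 ρ θ))) / 2 := by
      intro θ
      rw [Complex.add_conj]
      push_cast
      ring
    simp only [h2] at h1
    rw [intervalIntegral.integral_div,
      intervalIntegral.integral_add (hce.intervalIntegrable _ _)
        (hconjh.intervalIntegrable _ _),
      hC, (intInt_conj (fun θ => h (circleMap 0 ρ θ)) 0 (2 * Real.pi)).trans
        (by rw [hC, map_zero])] at h1
    simpa using h1
  -- coefficient formula
  set M := ∫ θ in (0:ℝ)..2 * Real.pi,
    ((starRingEnd ℂ) (circleMap 0 ρ θ)) ^ (m + 1) * h (circleMap 0 ρ θ) with hMdef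
  have hcoefM : (cauchyPowerSeries h 0 ρ).coeff (m + 1)
      = (2 * Real.pi * I : ℂ)⁻¹ * ((I * (((ρ : ℂ) ^ 2)⁻¹) ^ (m + 1)) * M) := by
    have h1 : (cauchyPowerSeries h 0 ρ).coeff (m + 1)
        = (2 * Real.pi * I : ℂ)⁻¹ • ∮ z in C(0, ρ), (1 / (z - 0)) ^ (m + 1) • (z - 0)⁻¹ • h z :=
      cauchyPowerSeries_apply h 0 ρ (m + 1) 1
    rw [h1, circleInt_eq]
    have h2 : ∀ θ : ℝ, circleMap 0 ρ θ * I *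
        ((1 / (circleMap 0 ρ θ - 0)) ^ (m + 1) • ((circleMap 0 ρ θ - 0)⁻¹ • h (circleMap 0 ρ θ)))
        = (I * (((ρ : ℂ) ^ 2)⁻¹) ^ (m + 1)) *
          (((starRingEnd ℂ) (circleMap 0 ρ θ)) ^ (m + 1) * h (circleMap 0 ρ θ)) := by
      intro θ
      have he := hek θ
      have hρc : ((ρ : ℝ) : ℂ) ≠ 0 := by exact_mod_cast hρ.ne'
      have hn : ((Complex.normSq (circleMap 0 ρ θ) : ℝ) : ℂ) = (ρ : ℂ) ^ 2 := by
        rw [Complex.normSq_eq_norm_sq, habs θ]; push_cast; ring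
      have hconj : (starRingEnd ℂ) (circleMap 0 ρ θ) = (ρ : ℂ) ^ 2 / circleMap 0 ρ θ := by
        rw [eq_div_iff he, mul_comm]
        rw [Complex.mul_conj]
        exact hn
      rw [hconj]
      simp only [sub_zero, smul_eq_mul, one_div, div_pow]
      field_simp
      rw [mul_assoc, mul_comm (h (circleMap 0 ρ θ)), ← mul_assoc, ← mul_pow, mul_assoc, ← mul_pow,
        one_div_mul_cancel he, one_div_mul_cancel (pow_ne_zero _ hρc)]
      ring
    simp only [h2]
    rw [intervalIntegral.integral_const_mul, smul_eq_mul]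
  have iA : IntervalIntegrable
      (fun θ : ℝ => ((starRingEnd ℂ) (circleMap 0 ρ θ)) ^ (m + 1) * h (circleMap 0 ρ θ))
      volume 0 (2 * Real.pi) := ((hconjc.pow _).mul hce).intervalIntegrable _ _
  have iB : IntervalIntegrable
      (fun θ : ℝ => ((starRingEnd ℂ) (circleMap 0 ρ θ)) ^ (m + 1)
        * (starRingEnd ℂ) (h (circleMap 0 ρ θ))) volume 0 (2 * Real.pi) :=
    ((hconjc.pow _).mul hconjh).intervalIntegrable _ _
  have iC : IntervalIntegrable
      (fun θ : ℝ => ((2 * d : ℝ) : ℂ) * ((starRingEnd ℂ) (circleMap 0 ρ θ)) ^ (m + 1))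
      volume 0 (2 * Real.pi) := (continuous_const.mul (hconjc.pow _)).intervalIntegrable _ _
  have hM2 : M = ∫ θ in (0:ℝ)..2 * Real.pi,
      ((starRingEnd ℂ) (circleMap 0 ρ θ)) ^ (m + 1)
        * ((2 * (h (circleMap 0 ρ θ)).re - 2 * d : ℝ) : ℂ) := by
    have hpt : ∀ θ : ℝ, ((starRingEnd ℂ) (circleMap 0 ρ θ)) ^ (m + 1)
        * ((2 * (h (circleMap 0 ρ θ)).re - 2 * d : ℝ) : ℂ)
        = ((starRingEnd ℂ) (circleMap 0 ρ θ)) ^ (m + 1) * h (circleMap 0 ρ θ)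
          + ((starRingEnd ℂ) (circleMap 0 ρ θ)) ^ (m + 1)
              * (starRingEnd ℂ) (h (circleMap 0 ρ θ))
          - ((2 * d : ℝ) : ℂ) * ((starRingEnd ℂ) (circleMap 0 ρ θ)) ^ (m + 1) := by
      intro θ
      have hac := Complex.add_conj (h (circleMap 0 ρ θ))
      push_cast at hac ⊢
      linear_combination (-((starRingEnd ℂ) (circleMap 0 ρ θ)) ^ (m + 1)) * hac
    have : (∫ θ in (0:ℝ)..2 * Real.pi, ((starRingEnd ℂ) (circleMap 0 ρ θ)) ^ (m + 1)
        * ((2 * (h (circleMap 0 ρ θ)).re - 2 * d : ℝ) : ℂ)) = M := by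
      simp only [hpt]
      rw [intervalIntegral.integral_sub (iA.add iB) iC,
        intervalIntegral.integral_add iA iB, hBc, add_zero,
        intervalIntegral.integral_const_mul, hD, mul_zero, sub_zero, hMdef]
    exact this.symm
  have hMnorm : ‖M‖ ≤ ρ ^ (m + 1) * (4 * Real.pi * d) := by
    rw [hM2]
    calc ‖∫ θ in (0:ℝ)..2 * Real.pi, ((starRingEnd ℂ) (circleMap 0 ρ θ)) ^ (m + 1)
          * ((2 * (h (circleMap 0 ρ θ)).re - 2 * d : ℝ) : ℂ)‖
        ≤ ∫ θ in (0:ℝ)..2 * Real.pi, ‖((starRingEnd ℂ) (circleMap 0 ρ θ)) ^ (m + 1)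
          * ((2 * (h (circleMap 0 ρ θ)).re - 2 * d : ℝ) : ℂ)‖ :=
          intervalIntegral.norm_integral_le_integral_norm Real.two_pi_pos.le
      _ = ∫ θ in (0:ℝ)..2 * Real.pi,
            ρ ^ (m + 1) * (2 * d - 2 * (h (circleMap 0 ρ θ)).re) := by
          apply intervalIntegral.integral_congr
          intro θ _
          dsimp only
          have h1 : ‖((starRingEnd ℂ) (circleMap 0 ρ θ)) ^ (m + 1)‖ = ρ ^ (m + 1) := by
            rw [norm_pow, RCLike.norm_conj, habs θ]
          rw [norm_mul, h1, Complex.norm_real, Real.norm_eq_abs,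
            abs_of_nonpos (by nlinarith [hre _ (hmem θ)])]
          ring
      _ = ρ ^ (m + 1) * (4 * Real.pi * d) := by
          have hrecont : Continuous fun θ : ℝ => (h (circleMap 0 ρ θ)).re :=
            Complex.continuous_re.comp hce
          rw [intervalIntegral.integral_const_mul,
            intervalIntegral.integral_sub (g := fun θ => 2 * (h (circleMap 0 ρ θ)).re)
              (intervalIntegrable_const ..)
              ((continuous_const.mul hrecont).intervalIntegrable _ _),
            intervalIntegral.integral_const, intervalIntegral.integral_const_mul, hre0,
            mul_zero, sub_zero, smul_eq_mul]
          ring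
  have hρpow : (0:ℝ) < ρ ^ (m + 1) := pow_pos hρ _
  have hnorms : ‖(2 * Real.pi * I : ℂ)⁻¹ * ((I * (((ρ : ℂ) ^ 2)⁻¹) ^ (m + 1)) * M)‖
      = (2 * Real.pi)⁻¹ * (((ρ ^ 2) ^ (m + 1))⁻¹ * ‖M‖) := by
    simp [norm_mul, norm_inv, norm_pow, Complex.norm_real, abs_of_pos Real.pi_pos,
      abs_of_pos hρ, map_mul, Complex.norm_I,
      Complex.norm_two]
  calc ‖(cauchyPowerSeries h 0 ρ).coeff (m + 1)‖
      = (2 * Real.pi)⁻¹ * (((ρ ^ 2) ^ (m + 1))⁻¹ * ‖M‖) := by rw [hcoefM, hnorms]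
    _ ≤ (2 * Real.pi)⁻¹ * (((ρ ^ 2) ^ (m + 1))⁻¹ * (ρ ^ (m + 1) * (4 * Real.pi * d))) := by
        gcongr
    _ = 2 * d / ρ ^ (m + 1) := by
        rw [← pow_mul]
        field_simp
        ring
private lemma iter_series {g : ℂ → ℂ} {p : FormalMultilinearSeries ℂ ℂ ℂ} {rr : ℝ≥0∞}
    (hg : HasFPowerSeriesOnBall g p 0 rr) (n : ℕ) :
    ∃ q : FormalMultilinearSeries ℂ ℂ ℂ, HasFPowerSeriesOnBall (iteratedDeriv n g) q 0 rr ∧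
      ∀ k, q.coeff k = ((n + k).descFactorial n : ℂ) * p.coeff (n + k) := by
  induction n with
  | zero =>
    exact ⟨p, by simpa [iteratedDeriv_zero] using hg, fun k => by simp⟩
  | succ n ih =>
    obtain ⟨q, hq, hc⟩ := ih
    refine ⟨(ContinuousLinearMap.apply ℂ ℂ (1 : ℂ)).compFormalMultilinearSeries q.derivSeries,
      ?_, ?_⟩
    · have h1 := (ContinuousLinearMap.apply ℂ ℂ (1 : ℂ)).comp_hasFPowerSeriesOnBall hq.fderiv
      have h2 : iteratedDeriv (n + 1) g
          = (ContinuousLinearMap.apply ℂ ℂ (1 : ℂ)) ∘ fderiv ℂ (iteratedDeriv n g) := by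
        funext w
        rw [iteratedDeriv_succ]
        rfl
      rw [h2]
      exact h1
    · intro k
      have h3 : ((ContinuousLinearMap.apply ℂ ℂ (1 : ℂ)).compFormalMultilinearSeries
          q.derivSeries).coeff k = q.derivSeries k (fun _ => (1 : ℂ)) 1 := rfl
      rw [h3, FormalMultilinearSeries.derivSeries_apply_diag]
      have h4 : (k + 1) • q (k + 1) (fun _ => (1 : ℂ)) = ((k : ℂ) + 1) * q.coeff (k + 1) := by
        rw [nsmul_eq_mul]
        push_cast
        rfl
      rw [h4, hc (k + 1)]
      have h5 : (n + 1 + k).descFactorial (n + 1) = (k + 1) * (n + (k + 1)).descFactorial n := by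
        have : n + 1 + k = (n + (k + 1)) := by omega
        rw [this, Nat.descFactorial_succ]
        congr 1
        omega
      have h6 : n + 1 + k = n + (k + 1) := by omega
      rw [h5, h6]
      push_cast
      ring

theorem stmt15 (R r : ℝ) (f : ℂ → ℂ) (G : Set ℂ)
    (hR : 0 < R) (hr : 0 ≤ r) (h3 : r < R)
    (hG : IsOpen G) (hGconn : IsConnected G)
    (hhull : convexHull ℝ G ≠ Set.univ)
    (hf : DifferentiableOn ℂ f (ball 0 R))
    (hmaps : Set.MapsTo f (ball 0 R) G)
    (z : ℂ) (hz : ‖z‖ = r) (n : ℕ) :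
    ‖iteratedDeriv n f z - iteratedDeriv n f 0‖ ≤
      2 * n.factorial * (R ^ (n + 1) - (R - r) ^ (n + 1)) / ((R - r) ^ (n + 1) * R ^ n) *
        infDist (f 0) (frontier (convexHull ℝ G)) := by
  classical
  set S : Set ℂ := convexHull ℝ G with hS
  set d : ℝ := infDist (f 0) (frontier S) with hd
  have hd0 : 0 ≤ d := infDist_nonneg
  have h0mem : (0:ℂ) ∈ ball (0:ℂ) R := by simpa using hR
  have hf0G : f 0 ∈ G := hmaps h0mem
  have hf0S : f 0 ∈ S := subset_convexHull ℝ G hf0G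
  -- frontier nonempty
  have hfront : (frontier S).Nonempty := by
    rw [Set.nonempty_iff_ne_empty]
    intro hempty
    rcases isClopen_iff.mp (isClopen_iff_frontier_eq_empty.mpr hempty) with h1 | h1
    · rw [h1] at hf0S; exact hf0S
    · exact hhull h1
  obtain ⟨w₀, hw₀f, hw₀d⟩ := isClosed_frontier.exists_infDist_eq_dist hfront (f 0)
  -- separation
  have hSconv : Convex ℝ S := convex_convexHull ℝ G
  have hIconv : Convex ℝ (interior S) := hSconv.interior
  have hw₀notin : w₀ ∉ interior S := hw₀f.2
  obtain ⟨ℓ, hℓ⟩ := geometric_hahn_banach_open_point hIconv isOpen_interior hw₀notin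
  have hGint : G ⊆ interior S := interior_maximal (subset_convexHull ℝ G) hG
  set c : ℂ := (ℓ 1 : ℝ) + (ℓ I : ℝ) * I with hc
  have hrep : ∀ y : ℂ, ((starRingEnd ℂ) c * y).re = ℓ y := by
    intro y
    have hy : y = (y.re : ℝ) • (1:ℂ) + (y.im : ℝ) • I := by
      rw [Complex.real_smul, Complex.real_smul, mul_one]
      exact (Complex.re_add_im y).symm
    conv_rhs => rw [hy, ℓ.map_add, ℓ.map_smul, ℓ.map_smul]
    simp only [hc, smul_eq_mul, map_add, map_mul, Complex.conj_ofReal, Complex.conj_I,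
      Complex.mul_re, Complex.add_re, Complex.add_im, Complex.ofReal_re, Complex.ofReal_im,
      Complex.mul_im, Complex.I_re, Complex.I_im, Complex.neg_re, Complex.neg_im]
    ring
  have hcne : c ≠ 0 := by
    intro h0'
    have h1 : ℓ (f 0) < ℓ w₀ := hℓ _ (hGint hf0G)
    have h2 : ∀ y, ℓ y = 0 := by
      intro y; rw [← hrep y, h0', map_zero, zero_mul, Complex.zero_re]
    rw [h2, h2] at h1; exact lt_irrefl _ h1
  have hcnorm : (0:ℝ) < ‖c‖ := norm_pos_iff.mpr hcne
  set u : ℂ := (‖c‖ : ℝ)⁻¹ • c with hu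
  have hunorm : ‖u‖ = 1 := by
    rw [hu, norm_smul, norm_inv, norm_norm, inv_mul_cancel₀ hcnorm.ne']
  have hulin : ∀ y : ℂ, ((starRingEnd ℂ) u * y).re = ‖c‖⁻¹ * ℓ y := by
    intro y
    rw [hu, Complex.real_smul, map_mul, Complex.conj_ofReal, mul_assoc,
      Complex.re_ofReal_mul, hrep]
  have hukey : ∀ w ∈ ball (0:ℂ) R, ((starRingEnd ℂ) u * (f w - f 0)).re ≤ d := by
    intro w hw
    have h1 : ℓ (f w) < ℓ w₀ := hℓ _ (hGint (hmaps hw))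
    have h2 : ((starRingEnd ℂ) u * (f w - f 0)).re = ‖c‖⁻¹ * (ℓ (f w) - ℓ (f 0)) := by
      rw [hulin, map_sub]
    have h4 : ((starRingEnd ℂ) u * (w₀ - f 0)).re = ‖c‖⁻¹ * (ℓ w₀ - ℓ (f 0)) := by
      rw [hulin, map_sub]
    have h5 : ((starRingEnd ℂ) u * (w₀ - f 0)).re ≤ ‖(starRingEnd ℂ) u * (w₀ - f 0)‖ := by
      exact Complex.re_le_norm _
    have h6 : ‖(starRingEnd ℂ) u * (w₀ - f 0)‖ = ‖w₀ - f 0‖ := by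
      rw [norm_mul, RCLike.norm_conj, hunorm, one_mul]
    have h7 : ‖w₀ - f 0‖ = d := by
      rw [hd, hw₀d, dist_eq_norm, norm_sub_rev]
    have h8 : ‖c‖⁻¹ * (ℓ (f w) - ℓ (f 0)) ≤ ‖c‖⁻¹ * (ℓ w₀ - ℓ (f 0)) := by
      have : (0:ℝ) ≤ ‖c‖⁻¹ := by positivity
      nlinarith
    rw [h2]
    calc ‖c‖⁻¹ * (ℓ (f w) - ℓ (f 0)) ≤ ‖c‖⁻¹ * (ℓ w₀ - ℓ (f 0)) := h8
      _ = ((starRingEnd ℂ) u * (w₀ - f 0)).re := h4.symm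
      _ ≤ ‖(starRingEnd ℂ) u * (w₀ - f 0)‖ := h5
      _ = d := by rw [h6, h7]
  -- fixed power series at radius ρ₀
  set ρ₀ : ℝ≥0 := ⟨(r + R) / 2, by positivity⟩ with hρ₀def
  have hρ₀coe : (ρ₀ : ℝ) = (r + R) / 2 := rfl
  have hρ₀pos : 0 < ρ₀ := by
    rw [← NNReal.coe_pos, hρ₀coe]; positivity
  have hρ₀R : (ρ₀ : ℝ) < R := by rw [hρ₀coe]; linarith
  have hrρ₀ : r < (ρ₀ : ℝ) := by rw [hρ₀coe]; linarith
  have hfρ₀ : HasFPowerSeriesOnBall f (cauchyPowerSeries f 0 ρ₀) 0 ρ₀ :=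
    (hf.mono (closedBall_subset_ball hρ₀R)).hasFPowerSeriesOnBall hρ₀pos
  set p := cauchyPowerSeries f 0 (ρ₀ : ℝ) with hpdef
  -- coefficient bounds
  have hcoeffb : ∀ k, 1 ≤ k → ‖p.coeff k‖ ≤ 2 * d / R ^ k := by
    intro k hk
    have hball : ∀ ρ : ℝ, ρ ∈ Set.Ioo 0 R → ‖p.coeff k‖ * ρ ^ k ≤ 2 * d := by
      intro ρ hρmem
      obtain ⟨hρ0, hρR⟩ := hρmem
      lift ρ to ℝ≥0 using hρ0.le
      set h : ℂ → ℂ := fun w => (starRingEnd ℂ) u * f w - (starRingEnd ℂ) u * f 0 with hhdef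
      have hρ0' : (0:ℝ) < (ρ : ℝ) := hρ0
      have hρpos : 0 < ρ := by exact_mod_cast hρ0
      have hsub : closedBall (0:ℂ) (ρ:ℝ) ⊆ ball 0 R := closedBall_subset_ball hρR
      have hdiffh : DifferentiableOn ℂ h (closedBall 0 (ρ:ℝ)) :=
        ((hf.mono hsub).const_mul _).sub_const _
      have h0' : h 0 = 0 := sub_self _
      have hreh : ∀ w ∈ closedBall (0:ℂ) (ρ:ℝ), (h w).re ≤ d := by
        intro w hw
        have := hukey w (hsub hw)
        rw [mul_sub] at this
        exact this
      have hcb := coeff_bound hρ0' hdiffh h0' hreh hk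
      have hfρ : HasFPowerSeriesOnBall f (cauchyPowerSeries f 0 ρ) 0 ρ :=
        (hf.mono hsub).hasFPowerSeriesOnBall hρpos
      have hpeq : cauchyPowerSeries f 0 (ρ:ℝ) = p :=
        hfρ.hasFPowerSeriesAt.eq_formalMultilinearSeries hfρ₀.hasFPowerSeriesAt
      set L : ℂ →L[ℂ] ℂ := ((starRingEnd ℂ) u) • ContinuousLinearMap.id ℂ ℂ with hL
      have hhb : HasFPowerSeriesOnBall h
          (L.compFormalMultilinearSeries (cauchyPowerSeries f 0 (ρ:ℝ))
            - constFormalMultilinearSeries ℂ ℂ ((starRingEnd ℂ) u * f 0)) 0 ρ := by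
        have h1 := L.comp_hasFPowerSeriesOnBall hfρ
        have h2 : HasFPowerSeriesOnBall (fun _ : ℂ => (starRingEnd ℂ) u * f 0)
            (constFormalMultilinearSeries ℂ ℂ ((starRingEnd ℂ) u * f 0)) 0 ρ :=
          hasFPowerSeriesOnBall_const.mono (by exact_mod_cast hρpos) le_top
        have h3 := h1.sub h2
        have hfun : h = (⇑L ∘ f) - (fun _ : ℂ => (starRingEnd ℂ) u * f 0) := by
          funext w
          simp [hhdef, hL]
        rw [hfun]
        exact h3
      have huniq : cauchyPowerSeries h 0 (ρ:ℝ)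
          = L.compFormalMultilinearSeries (cauchyPowerSeries f 0 (ρ:ℝ))
            - constFormalMultilinearSeries ℂ ℂ ((starRingEnd ℂ) u * f 0) :=
        ((hdiffh.hasFPowerSeriesOnBall hρpos).hasFPowerSeriesAt).eq_formalMultilinearSeries
          hhb.hasFPowerSeriesAt
      have hcoeffeq : ‖(cauchyPowerSeries h 0 (ρ:ℝ)).coeff k‖ = ‖p.coeff k‖ := by
        rw [huniq, hpeq]
        have hkne : k ≠ 0 := by omega
        have hsubc : (L.compFormalMultilinearSeries p
            - constFormalMultilinearSeries ℂ ℂ ((starRingEnd ℂ) u * f 0)).coeff k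
            = (starRingEnd ℂ) u * p.coeff k := by
          have e1 : ((L.compFormalMultilinearSeries p
              - constFormalMultilinearSeries ℂ ℂ ((starRingEnd ℂ) u * f 0)) k)
              = (L.compFormalMultilinearSeries p) k
                - (constFormalMultilinearSeries ℂ ℂ ((starRingEnd ℂ) u * f 0)) k := rfl
          rw [FormalMultilinearSeries.coeff, e1]
          simp only [FormalMultilinearSeries.coeff, e1,
            ContinuousMultilinearMap.sub_apply,
            ContinuousLinearMap.compFormalMultilinearSeries_apply,
            ContinuousLinearMap.compContinuousMultilinearMap_coe, Function.comp_apply,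
            constFormalMultilinearSeries_apply_of_nonzero hkne, ContinuousMultilinearMap.zero_apply,
            sub_zero, hL, ContinuousLinearMap.smul_apply, ContinuousLinearMap.id_apply,
            smul_eq_mul]
        rw [hsubc, norm_mul, RCLike.norm_conj, hunorm, one_mul]
      rw [hcoeffeq] at hcb
      calc ‖p.coeff k‖ * (ρ:ℝ) ^ k ≤ (2 * d / (ρ:ℝ) ^ k) * (ρ:ℝ) ^ k := by
            have : (0:ℝ) < (ρ:ℝ) ^ k := pow_pos hρ0' k
            exact mul_le_mul_of_nonneg_right hcb this.le
        _ = 2 * d := by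
            field_simp
    have hlim : ‖p.coeff k‖ * R ^ k ≤ 2 * d := by
      have hcont : Filter.Tendsto (fun ρ : ℝ => ‖p.coeff k‖ * ρ ^ k)
          (nhdsWithin R (Set.Iio R)) (nhds (‖p.coeff k‖ * R ^ k)) :=
        ((continuous_const.mul (continuous_pow k)).tendsto R).mono_left nhdsWithin_le_nhds
      refine le_of_tendsto hcont ?_
      filter_upwards [Ioo_mem_nhdsLT_of_mem (Set.mem_Ioc.mpr ⟨hR, le_refl R⟩)] with ρ hρ
      exact hball ρ hρ
    rw [le_div_iff₀ (pow_pos hR k)]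
    exact hlim
  -- assemble
  obtain ⟨q, hq, hqc⟩ := iter_series hfρ₀ n
  have hzball : z ∈ Metric.eball (0:ℂ) (ρ₀ : ℝ≥0∞) := by
    rw [Metric.emetric_ball_nnreal]
    simp only [mem_ball, dist_eq_norm, sub_zero, hz]
    exact hrρ₀
  have hsum := hq.hasSum hzball
  rw [zero_add] at hsum
  have hsum' : HasSum (fun k => z ^ k * q.coeff k) (iteratedDeriv n f z) := by
    have : ∀ k : ℕ, q k (fun _ => z) = z ^ k * q.coeff k := by
      intro k
      rw [FormalMultilinearSeries.apply_eq_pow_smul_coeff, smul_eq_mul]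
    simpa only [this] using hsum
  have h00 : q.coeff 0 = iteratedDeriv n f 0 := hq.coeff_zero 1
  have hshift := (hasSum_nat_add_iff' 1).mpr hsum'
  rw [Finset.sum_range_one, pow_zero, one_mul, h00] at hshift
  set x : ℝ := r / R with hx
  have hxnn : 0 ≤ x := by positivity
  have hx1 : ‖x‖ < 1 := by
    rw [Real.norm_eq_abs, _root_.abs_of_nonneg hxnn, hx, div_lt_one hR]
    exact h3
  have hgeo := hasSum_choose_mul_geometric_of_norm_lt_one (𝕜 := ℝ) n hx1
  have hgeo1 := (hasSum_nat_add_iff' 1).mpr hgeo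
  rw [Finset.sum_range_one, pow_zero, mul_one, Nat.zero_add, Nat.choose_self,
    Nat.cast_one] at hgeo1
  have hgeo2 := hgeo1.mul_left (2 * d * (n.factorial : ℝ) / R ^ n)
  have hRr : (0:ℝ) < R - r := by linarith
  have hub : ∀ k : ℕ, ‖z ^ (k + 1) * q.coeff (k + 1)‖ ≤
      (2 * d * (n.factorial : ℝ) / R ^ n) * (((k + 1 + n).choose n : ℝ) * x ^ (k + 1)) := by
    intro k
    have h1 : ‖q.coeff (k + 1)‖ ≤ ((n + (k + 1)).descFactorial n : ℝ)
        * (2 * d / R ^ (n + (k + 1))) := by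
      rw [hqc (k + 1), norm_mul]
      have h2 : ‖(((n + (k + 1)).descFactorial n : ℕ) : ℂ)‖
          = ((n + (k + 1)).descFactorial n : ℝ) := by
        rw [Complex.norm_natCast]
      rw [h2]
      exact mul_le_mul_of_nonneg_left (hcoeffb (n + (k + 1)) (by omega)) (by positivity)
    calc ‖z ^ (k + 1) * q.coeff (k + 1)‖ = r ^ (k + 1) * ‖q.coeff (k + 1)‖ := by
          rw [norm_mul, norm_pow, hz]
      _ ≤ r ^ (k + 1) * (((n + (k + 1)).descFactorial n : ℝ)
            * (2 * d / R ^ (n + (k + 1)))) := by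
          refine mul_le_mul_of_nonneg_left h1 (by positivity)
      _ = (2 * d * (n.factorial : ℝ) / R ^ n) * (((k + 1 + n).choose n : ℝ) * x ^ (k + 1)) := by
          rw [Nat.descFactorial_eq_factorial_mul_choose]
          have hch : (n + (k + 1)).choose n = (k + 1 + n).choose n := by rw [Nat.add_comm]
          rw [hch, hx, div_pow, pow_add]
          push_cast
          field_simp
          ring
  calc ‖iteratedDeriv n f z - iteratedDeriv n f 0‖
      = ‖∑' k : ℕ, z ^ (k + 1) * q.coeff (k + 1)‖ := by rw [hshift.tsum_eq]
    _ ≤ (2 * d * (n.factorial : ℝ) / R ^ n) * (1 / (1 - x) ^ (n + 1) - 1) :=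
        tsum_of_norm_bounded hgeo2 hub
    _ = 2 * n.factorial * (R ^ (n + 1) - (R - r) ^ (n + 1)) / ((R - r) ^ (n + 1) * R ^ n) * d := by
        have h1x : 1 - x = (R - r) / R := by rw [hx]; field_simp
        rw [h1x, div_pow]
        field_simp
end

section
/- Let f be holomorphic on D_R with sup_{|ζ|<R} |f(ζ)| = M < ∞. Then for every n ≥ 0 and every z with |z| = r < R, |f^{(n)}(z) - f^{(n)}(0)| ≤ (2 n! (R^{n+1} - (R - r)^{n+1})) / ((R - r)^{n+1} R^n) · (M - |f(0)|). -/
open Complex Metric MeasureTheory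

private lemma intervalIntegral_conj' {g : ℝ → ℂ} {a b : ℝ}
    (hg : IntervalIntegrable g MeasureTheory.volume a b) :
    (∫ x in a..b, (starRingEnd ℂ) (g x)) = (starRingEnd ℂ) (∫ x in a..b, g x) := by
  have := (Complex.conjCLE.toContinuousLinearMap).intervalIntegral_comp_comm hg
  simpa using this

private lemma intervalIntegral_re' {g : ℝ → ℂ} {a b : ℝ}
    (hg : IntervalIntegrable g MeasureTheory.volume a b) :
    (∫ x in a..b, (g x).re) = (∫ x in a..b, g x).re := by
  simpa using Complex.reCLM.intervalIntegral_comp_comm hg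

private lemma circle_pow_vanish {R ρ : ℝ} {f : ℂ → ℂ} (hρ : 0 < ρ) (hρR : ρ < R)
    (hf : DifferentiableOn ℂ f (ball 0 R)) (j : ℕ) :
    (∫ θ in (0:ℝ)..2 * Real.pi, (circleMap 0 ρ θ) ^ (j + 1) * f (circleMap 0 ρ θ)) = 0 := by
  have hsub : closedBall (0:ℂ) ρ ⊆ ball 0 R := closedBall_subset_ball hρR
  have h1 : (∮ z in C(0, ρ), z ^ j * f z) = 0 := by
    apply Complex.circleIntegral_eq_zero_of_differentiable_on_off_countable hρ.le
      Set.countable_empty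
    · exact (continuous_pow j).continuousOn.mul (hf.continuousOn.mono hsub)
    · intro z hz
      have hz' : z ∈ ball (0:ℂ) R := ball_subset_ball hρR.le hz.1
      exact (differentiableAt_pow j).mul (hf.differentiableAt (isOpen_ball.mem_nhds hz'))
  rw [circleIntegral] at h1
  have h2 : ∀ θ ∈ Set.uIcc (0:ℝ) (2 * Real.pi),
      deriv (circleMap 0 ρ) θ • ((circleMap 0 ρ θ) ^ j * f (circleMap 0 ρ θ)) =
      I * ((circleMap 0 ρ θ) ^ (j + 1) * f (circleMap 0 ρ θ)) := by
    intro θ _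
    rw [deriv_circleMap]
    simp only [smul_eq_mul, pow_succ]
    ring
  rw [intervalIntegral.integral_congr h2, intervalIntegral.integral_const_mul] at h1
  exact (mul_eq_zero.mp h1).resolve_left I_ne_zero

private lemma circle_mean_value {R ρ : ℝ} {f : ℂ → ℂ} (hρ : 0 < ρ) (hρR : ρ < R)
    (hf : DifferentiableOn ℂ f (ball 0 R)) :
    (∫ θ in (0:ℝ)..2 * Real.pi, f (circleMap 0 ρ θ)) = 2 * Real.pi * f 0 := by
  have hd : DifferentiableOn ℂ f (closedBall 0 ρ) := hf.mono (closedBall_subset_ball hρR)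
  have h1 := hd.circleIntegral_sub_inv_smul (w := 0) (mem_ball_self hρ)
  rw [circleIntegral] at h1
  have h2 : ∀ θ ∈ Set.uIcc (0:ℝ) (2 * Real.pi),
      deriv (circleMap 0 ρ) θ • ((circleMap 0 ρ θ - 0)⁻¹ • f (circleMap 0 ρ θ)) =
      I * f (circleMap 0 ρ θ) := by
    intro θ _
    have hne : circleMap 0 ρ θ ≠ 0 := circleMap_ne_center hρ.ne'
    rw [deriv_circleMap]
    simp only [smul_eq_mul, sub_zero]
    field_simp
  rw [intervalIntegral.integral_congr h2, intervalIntegral.integral_const_mul] at h1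
  have h3 : (2 * Real.pi * Complex.I : ℂ) • f 0 = I * (2 * Real.pi * f 0) := by
    simp [smul_eq_mul]; ring
  rw [h3] at h1
  exact mul_left_cancel₀ I_ne_zero h1

private lemma coeff_bound_rho {R M ρ : ℝ} {f : ℂ → ℂ} {u : ℂ}
    (hf : DifferentiableOn ℂ f (ball 0 R))
    (hb : ∀ w ∈ ball (0:ℂ) R, ‖f w‖ ≤ M)
    (hu : ‖u‖ = 1) (hu0 : u * f 0 = (‖f 0‖ : ℂ))
    (hρ : 0 < ρ) (hρR : ρ < R) {k : ℕ} (hk : k ≠ 0) :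
    ‖iteratedDeriv k f 0‖ * ρ ^ k ≤ k.factorial * (2 * (M - ‖f 0‖)) := by
  obtain ⟨j, rfl⟩ : ∃ j, k = j + 1 := ⟨k - 1, (Nat.succ_pred_eq_of_ne_zero hk).symm⟩
  have hρc : (ρ:ℂ) ≠ 0 := by exact_mod_cast hρ.ne'
  set c : ℝ → ℂ := fun θ => circleMap 0 ρ θ with hc
  have hcne : ∀ θ, c θ ≠ 0 := fun θ => circleMap_ne_center hρ.ne'
  have hcabs : ∀ θ, ‖c θ‖ = ρ := fun θ => by
    simp only [hc, norm_circleMap_zero]; exact abs_of_pos hρ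
  have hcball : ∀ θ, c θ ∈ ball (0:ℂ) R := by
    intro θ
    rw [mem_ball_zero_iff, hcabs θ]
    exact hρR
  have hconj : ∀ θ, (starRingEnd ℂ) (c θ) = (ρ:ℂ)^2 * (c θ)⁻¹ := by
    intro θ
    have h1 : (c θ) * (starRingEnd ℂ) (c θ) = ((ρ:ℂ))^2 := by
      rw [Complex.mul_conj]
      norm_cast
      rw [Complex.normSq_eq_norm_sq, hcabs θ]
    field_simp [hcne θ]
    linear_combination h1
  have hcc : Continuous c := continuous_circleMap 0 ρ
  have hfc : Continuous fun θ => f (c θ) :=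
    hf.continuousOn.comp_continuous hcc hcball
  -- power series coefficient
  set ρn : NNReal := ⟨ρ, hρ.le⟩ with hρn
  have hd : DifferentiableOn ℂ f (closedBall 0 ρ) := hf.mono (closedBall_subset_ball hρR)
  have hpb : HasFPowerSeriesOnBall f (cauchyPowerSeries f 0 ρ) 0 ρn :=
    DifferentiableOn.hasFPowerSeriesOnBall (R := ρn) hd (by exact_mod_cast hρ)
  set a : ℂ := (cauchyPowerSeries f 0 ρ).coeff (j+1) with ha
  have hitd : iteratedDeriv (j+1) f 0 = (((j+1).factorial : ℕ) : ℂ) * a := by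
    have h1 := hpb.factorial_smul (1:ℂ) (j+1)
    rw [iteratedDeriv_eq_iteratedFDeriv, ← h1, ha, FormalMultilinearSeries.coeff,
      nsmul_eq_mul]
    rfl
  -- E1 : express a as an integral
  set J : ℂ := ∫ θ in (0:ℝ)..2*Real.pi, (starRingEnd ℂ) ((c θ)^(j+1)) * f (c θ) with hJdef
  have hA : (2 * (Real.pi:ℂ) * I) * a =
      ∮ z in C(0, ρ), (1 / (z - 0)) ^ (j+1) • ((z - 0)⁻¹ • f z) := by
    have h1 := cauchyPowerSeries_apply f 0 ρ (j+1) 1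
    have h2 : a = (2 * (Real.pi:ℂ) * I)⁻¹ •
        ∮ z in C(0, ρ), (1 / (z - 0)) ^ (j+1) • ((z - 0)⁻¹ • f z) := by
      rw [ha, FormalMultilinearSeries.coeff]
      convert h1 using 2 <;> rfl
    rw [h2, smul_eq_mul]
    rw [← mul_assoc, mul_inv_cancel₀ Complex.two_pi_I_ne_zero, one_mul]
  have hEq : (2 * (Real.pi:ℂ) * I) * a = (I * (((ρ:ℂ)^2)⁻¹)^(j+1)) * J := by
    rw [hA, hJdef, circleIntegral, ← intervalIntegral.integral_const_mul]
    apply intervalIntegral.integral_congr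
    intro θ _
    simp only [hc]
    rw [deriv_circleMap]
    simp only [smul_eq_mul, sub_zero, one_div, map_pow, hconj θ, hc, mul_pow]
    have hne : circleMap 0 ρ θ ≠ 0 := circleMap_ne_center hρ.ne'
    rw [show (starRingEnd ℂ) (circleMap 0 ρ θ) = (ρ:ℂ)^2 * (circleMap 0 ρ θ)⁻¹ from hconj θ]
    field_simp [hne, hρc]
    have hρp : (ρ:ℂ)^2 * (ρ:ℂ)^(j*2) * (ρ:ℂ)⁻¹^2 * (ρ:ℂ)⁻¹^(j*2) = 1 := by
      rw [inv_pow, inv_pow]; field_simp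
    linear_combination (-((circleMap 0 ρ θ)⁻¹ * (circleMap 0 ρ θ)⁻¹ ^ j * f (circleMap 0 ρ θ))) * hρp
  have h5 : I * ((2 * (Real.pi:ℂ)) * ((ρ:ℂ)^2)^(j+1) * a) = I * J := by
    have h6 : (((ρ:ℂ)^2)⁻¹)^(j+1) * ((ρ:ℂ)^2)^(j+1) = 1 := by
      rw [← mul_pow, inv_mul_cancel₀ (pow_ne_zero 2 hρc), one_pow]
    calc I * ((2 * (Real.pi:ℂ)) * ((ρ:ℂ)^2)^(j+1) * a)
        = ((2 * (Real.pi:ℂ) * I) * a) * ((ρ:ℂ)^2)^(j+1) := by ring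
      _ = ((I * (((ρ:ℂ)^2)⁻¹)^(j+1)) * J) * ((ρ:ℂ)^2)^(j+1) := by rw [hEq]
      _ = I * J * ((((ρ:ℂ)^2)⁻¹)^(j+1) * ((ρ:ℂ)^2)^(j+1)) := by ring
      _ = I * J := by rw [h6, mul_one]
  have hJa : J = (((2*Real.pi * (ρ^2)^(j+1) : ℝ)) : ℂ) * a := by
    have := mul_left_cancel₀ I_ne_zero h5
    rw [← this]
    push_cast
    ring
  have hnJ : ‖J‖ = (2*Real.pi * (ρ^2)^(j+1)) * ‖a‖ := by
    have hpos : (0:ℝ) < 2*Real.pi*(ρ^2)^(j+1) := by positivity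
    rw [hJa, norm_mul, Complex.norm_real, Real.norm_eq_abs, abs_of_pos hpos]
  -- the nonnegative function φ
  set φ : ℝ → ℝ := fun θ => 2*M - 2*(u * f (c θ)).re with hφ
  have hφ0 : ∀ θ, 0 ≤ φ θ := by
    intro θ
    have h1 : (u * f (c θ)).re ≤ ‖f (c θ)‖ := by
      calc (u * f (c θ)).re ≤ ‖u * f (c θ)‖ := Complex.re_le_norm _
        _ = ‖u‖ * ‖f (c θ)‖ := by rw [norm_mul]
        _ = ‖f (c θ)‖ := by rw [hu, one_mul]
    have h2 := hb _ (hcball θ)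
    simp only [hφ]
    linarith
  -- integrability facts
  have hicp : Continuous fun θ => (starRingEnd ℂ) ((c θ)^(j+1)) :=
    Complex.continuous_conj.comp (hcc.pow (j+1))
  have hi1 : IntervalIntegrable (fun θ => (starRingEnd ℂ) ((c θ)^(j+1))) volume 0 (2*Real.pi) :=
    hicp.intervalIntegrable 0 (2*Real.pi)
  have hi2 : IntervalIntegrable (fun θ => (starRingEnd ℂ) ((c θ)^(j+1)) * f (c θ)) volume 0 (2*Real.pi) :=
    (hicp.mul hfc).intervalIntegrable 0 (2*Real.pi)
  have hi3 : IntervalIntegrable (fun θ => u * f (c θ)) volume 0 (2*Real.pi) :=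
    (continuous_const.mul hfc).intervalIntegrable 0 (2*Real.pi)
  have hi4 : IntervalIntegrable (fun θ => (starRingEnd ℂ) ((c θ)^(j+1) * (u * f (c θ)))) volume 0 (2*Real.pi) :=
    (Complex.continuous_conj.comp ((hcc.pow (j+1)).mul (continuous_const.mul hfc))).intervalIntegrable 0 (2*Real.pi)
  -- vanishing integrals
  have hV1 : (∫ θ in (0:ℝ)..2*Real.pi, (c θ)^(j+1) * f (c θ)) = 0 :=
    circle_pow_vanish hρ hρR hf j
  have hVc : (∫ θ in (0:ℝ)..2*Real.pi, (c θ)^(j+1)) = 0 := by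
    have h1 := circle_pow_vanish (f := fun _ => (1:ℂ)) hρ hρR
      (differentiableOn_const 1) j
    simpa using h1
  have hT1 : (∫ θ in (0:ℝ)..2*Real.pi, (starRingEnd ℂ) ((c θ)^(j+1))) = 0 := by
    rw [intervalIntegral_conj' (g := fun θ => (c θ)^(j+1)) ((hcc.pow (j+1)).intervalIntegrable 0 (2*Real.pi)), hVc, map_zero]
  have hT3 : (∫ θ in (0:ℝ)..2*Real.pi, (starRingEnd ℂ) ((c θ)^(j+1) * (u * f (c θ)))) = 0 := by
    rw [intervalIntegral_conj' (g := fun θ => (c θ)^(j+1) * (u * f (c θ))) (((hcc.pow (j+1)).mul (continuous_const.mul hfc)).intervalIntegrable 0 (2*Real.pi))]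
    have h1 : (∫ θ in (0:ℝ)..2*Real.pi, (c θ)^(j+1) * (u * f (c θ)))
        = u * ∫ θ in (0:ℝ)..2*Real.pi, (c θ)^(j+1) * f (c θ) := by
      rw [← intervalIntegral.integral_const_mul]
      apply intervalIntegral.integral_congr
      intro θ _
      dsimp only
      ring
    rw [h1, hV1, mul_zero, map_zero]
  -- split the weighted integral
  have hsplit : ∀ θ ∈ Set.uIcc (0:ℝ) (2*Real.pi),
      (starRingEnd ℂ) ((c θ)^(j+1)) * ((φ θ : ℝ) : ℂ) =
        ((2*M : ℝ) : ℂ) * (starRingEnd ℂ) ((c θ)^(j+1))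
        - (u * ((starRingEnd ℂ) ((c θ)^(j+1)) * f (c θ))
          + (starRingEnd ℂ) ((c θ)^(j+1) * (u * f (c θ)))) := by
    intro θ _
    have h1 : ((φ θ : ℝ) : ℂ) = ((2*M:ℝ):ℂ) - (u * f (c θ) + (starRingEnd ℂ) (u * f (c θ))) := by
      rw [Complex.add_conj]
      simp only [hφ]
      push_cast
      ring
    rw [h1]
    simp only [map_mul]
    ring
  have hW : (∫ θ in (0:ℝ)..2*Real.pi, (starRingEnd ℂ) ((c θ)^(j+1)) * ((φ θ : ℝ) : ℂ))
      = - (u * J) := by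
    rw [intervalIntegral.integral_congr hsplit]
    rw [intervalIntegral.integral_sub (hi1.const_mul _) ((hi2.const_mul u).add hi4)]
    rw [intervalIntegral.integral_add (hi2.const_mul u) hi4]
    rw [intervalIntegral.integral_const_mul, intervalIntegral.integral_const_mul]
    rw [hT1, hT3, hJdef]
    ring
  -- norm bound
  have hWb : ‖∫ θ in (0:ℝ)..2*Real.pi, (starRingEnd ℂ) ((c θ)^(j+1)) * ((φ θ : ℝ) : ℂ)‖
      ≤ ∫ θ in (0:ℝ)..2*Real.pi, ρ^(j+1) * φ θ := by
    have h1 := intervalIntegral.norm_integral_le_integral_norm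
      (f := fun θ => (starRingEnd ℂ) ((c θ)^(j+1)) * ((φ θ : ℝ) : ℂ))
      (μ := volume) (a := 0) (b := 2*Real.pi) (by positivity)
    refine h1.trans (le_of_eq ?_)
    apply intervalIntegral.integral_congr
    intro θ _
    dsimp only
    rw [norm_mul, Complex.norm_real, Real.norm_eq_abs, _root_.abs_of_nonneg (hφ0 θ)]
    congr 1
    rw [RCLike.norm_conj, norm_pow, hcabs θ]
  -- compute the φ integral
  have hre : (∫ θ in (0:ℝ)..2*Real.pi, (u * f (c θ)).re) = 2*Real.pi*‖f 0‖ := by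
    rw [intervalIntegral_re' hi3]
    have h1 : (∫ θ in (0:ℝ)..2*Real.pi, u * f (c θ)) = u * (2*Real.pi * f 0) := by
      rw [intervalIntegral.integral_const_mul, circle_mean_value hρ hρR hf]
    rw [h1]
    have h2 : u * (2*(Real.pi:ℂ) * f 0) = ((2*Real.pi*‖f 0‖ : ℝ) : ℂ) := by
      push_cast
      rw [show u * (2*(Real.pi:ℂ) * f 0) = 2*(Real.pi:ℂ) * (u * f 0) by ring, hu0]
    rw [h2, Complex.ofReal_re]
  have hφint : (∫ θ in (0:ℝ)..2*Real.pi, φ θ) = 4*Real.pi*(M - ‖f 0‖) := by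
    have hier : IntervalIntegrable (fun θ => (u * f (c θ)).re) volume 0 (2*Real.pi) :=
      (Complex.continuous_re.comp (continuous_const.mul hfc)).intervalIntegrable 0 (2*Real.pi)
    have h1 : (∫ θ in (0:ℝ)..2*Real.pi, φ θ)
        = (∫ θ in (0:ℝ)..2*Real.pi, (2*M : ℝ)) - ∫ θ in (0:ℝ)..2*Real.pi, 2*(u * f (c θ)).re := by
      rw [← intervalIntegral.integral_sub intervalIntegrable_const (hier.const_mul 2)]
    rw [h1, intervalIntegral.integral_const, intervalIntegral.integral_const_mul, hre]
    simp only [smul_eq_mul, sub_zero]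
    ring
  -- put everything together
  have hkey : ‖a‖ * ρ^(j+1) ≤ 2*(M - ‖f 0‖) := by
    have h1 : ‖J‖ ≤ ρ^(j+1) * (4*Real.pi*(M - ‖f 0‖)) := by
      have h2 : ‖J‖ = ‖- (u * J)‖ := by
        rw [norm_neg, norm_mul, hu, one_mul]
      rw [h2, ← hW]
      refine hWb.trans (le_of_eq ?_)
      rw [intervalIntegral.integral_const_mul, hφint]
    rw [hnJ] at h1
    have hP : (0:ℝ) < ρ^(j+1) := pow_pos hρ _
    have hsq : (ρ^2)^(j+1) = ρ^(j+1) * ρ^(j+1) := by ring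
    rw [hsq] at h1
    nlinarith [Real.pi_pos, norm_nonneg a, mul_pos Real.two_pi_pos hP]
  rw [hitd, norm_mul]
  have h9 : ‖(((j+1).factorial : ℕ) : ℂ)‖ = ((j+1).factorial : ℝ) := by
    rw [Complex.norm_natCast]
  rw [h9, mul_assoc]
  have h10 : (0:ℝ) ≤ ((j+1).factorial : ℝ) := by positivity
  exact mul_le_mul_of_nonneg_left hkey h10

private lemma coeff_bound_s16 {R M : ℝ} {f : ℂ → ℂ} {u : ℂ} (hR : 0 < R)
    (hf : DifferentiableOn ℂ f (ball 0 R))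
    (hb : ∀ w ∈ ball (0:ℂ) R, ‖f w‖ ≤ M)
    (hu : ‖u‖ = 1) (hu0 : u * f 0 = (‖f 0‖ : ℂ))
    {k : ℕ} (hk : k ≠ 0) :
    ‖iteratedDeriv k f 0‖ * R ^ k ≤ k.factorial * (2 * (M - ‖f 0‖)) := by
  have tend : Filter.Tendsto (fun ρ : ℝ => ‖iteratedDeriv k f 0‖ * ρ ^ k)
      (nhdsWithin R (Set.Iio R)) (nhds (‖iteratedDeriv k f 0‖ * R ^ k)) :=
    ((continuous_const.mul (continuous_pow k)).tendsto R).mono_left nhdsWithin_le_nhds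
  refine le_of_tendsto tend ?_
  filter_upwards [Ioo_mem_nhdsLT_of_mem (Set.mem_Ioc.mpr ⟨hR, le_refl R⟩)] with ρ hρ
  exact coeff_bound_rho hf hb hu hu0 hρ.1 hρ.2 hk

private lemma iterated_series {f : ℂ → ℂ} {p : FormalMultilinearSeries ℂ ℂ ℂ} {s : ENNReal}
    (hp : HasFPowerSeriesOnBall f p 0 s) (n : ℕ) :
    ∃ q : FormalMultilinearSeries ℂ ℂ ℂ,
      HasFPowerSeriesOnBall (iteratedDeriv n f) q 0 s ∧
      ∀ k, q.coeff k = (((n + k).factorial : ℂ) / (k.factorial : ℂ)) * p.coeff (n + k) := by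
  induction n with
  | zero =>
    refine ⟨p, by simpa using hp, fun k => by
      rw [zero_add, div_self (by exact_mod_cast k.factorial_ne_zero : (k.factorial:ℂ) ≠ 0), one_mul]⟩
  | succ n ih =>
    obtain ⟨q, hq, hco⟩ := ih
    refine ⟨(ContinuousLinearMap.apply ℂ ℂ (1:ℂ)).compFormalMultilinearSeries q.derivSeries,
      ?_, ?_⟩
    · have h1 := (ContinuousLinearMap.apply ℂ ℂ (1:ℂ)).comp_hasFPowerSeriesOnBall hq.fderiv
      have h2 : (ContinuousLinearMap.apply ℂ ℂ (1:ℂ)) ∘ (fderiv ℂ (iteratedDeriv n f)) =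
          deriv (iteratedDeriv n f) := by
        funext z
        simp [ContinuousLinearMap.apply_apply, Function.comp_apply, fderiv_apply_one_eq_deriv]
      rw [iteratedDeriv_succ, ← h2]
      exact h1
    · intro k
      have h3 : ((ContinuousLinearMap.apply ℂ ℂ (1:ℂ)).compFormalMultilinearSeries
            q.derivSeries).coeff k = ((k:ℂ) + 1) * q.coeff (k+1) := by
        simp only [FormalMultilinearSeries.coeff,
          ContinuousLinearMap.compFormalMultilinearSeries_apply,
          ContinuousLinearMap.compContinuousMultilinearMap_coe, Function.comp_apply,
          ContinuousLinearMap.apply_apply]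
        show ((q.derivSeries k) fun _ => (1:ℂ)) 1 = _
        rw [q.derivSeries_apply_diag]
        rw [nsmul_eq_mul]
        push_cast
        rfl
      rw [h3, hco (k+1)]
      have he : n + 1 + k = n + (k + 1) := by ring
      rw [he]
      have h4 : ((k:ℂ) + 1) ≠ 0 := Nat.cast_add_one_ne_zero k
      have h5 : ((k.factorial : ℂ)) ≠ 0 := by exact_mod_cast k.factorial_ne_zero
      rw [Nat.factorial_succ]
      push_cast
      field_simp

theorem stmt16 (R r M : ℝ) (f : ℂ → ℂ)
    (hR : 0 < R) (hr : 0 ≤ r) (h3 : r < R)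
    (hf : DifferentiableOn ℂ f (ball 0 R))
    (hM : IsLUB ((fun w => ‖f w‖) '' ball (0:ℂ) R) M)
    (z : ℂ) (hz : ‖z‖ = r) (n : ℕ) :
    ‖iteratedDeriv n f z - iteratedDeriv n f 0‖ ≤
      2 * n.factorial * (R ^ (n + 1) - (R - r) ^ (n + 1)) / ((R - r) ^ (n + 1) * R ^ n) *
        (M - ‖f 0‖) := by
  have hball0 : (0:ℂ) ∈ ball (0:ℂ) R := mem_ball_self hR
  have hub : ∀ w ∈ ball (0:ℂ) R, ‖f w‖ ≤ M := fun w hw => hM.1 ⟨w, hw, rfl⟩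
  have hM0 : ‖f 0‖ ≤ M := hub 0 hball0
  -- choose a unit u rotating f 0 to the positive real axis
  obtain ⟨u, hu, hu0⟩ : ∃ u : ℂ, ‖u‖ = 1 ∧ u * f 0 = (‖f 0‖ : ℂ) := by
    by_cases h : f 0 = 0
    · exact ⟨1, by simp, by simp [h]⟩
    · have hns : ((‖f 0‖ : ℝ) : ℂ) ≠ 0 := by
        exact_mod_cast norm_ne_zero_iff.mpr h
      refine ⟨(starRingEnd ℂ) (f 0) / (‖f 0‖ : ℝ), ?_, ?_⟩
      · rw [norm_div, RCLike.norm_conj, Complex.norm_real, Real.norm_eq_abs,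
          _root_.abs_of_nonneg (norm_nonneg _), div_self (norm_ne_zero_iff.mpr h)]
      · field_simp
        rw [mul_comm, Complex.mul_conj, Complex.normSq_eq_norm_sq]
        push_cast
        rfl
  set cα : ℕ → ℂ := fun m => ((m.factorial : ℂ))⁻¹ * iteratedDeriv m f 0 with hcα
  have hαb : ∀ m : ℕ, m ≠ 0 → ‖cα m‖ ≤ 2*(M - ‖f 0‖) / R ^ m := by
    intro m hm
    have h1 := coeff_bound_s16 hR hf hub hu hu0 hm
    have h2 : ‖cα m‖ = ‖iteratedDeriv m f 0‖ / (m.factorial : ℝ) := by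
      rw [hcα]
      dsimp only
      rw [norm_mul, norm_inv, Complex.norm_natCast]
      ring
    rw [h2, div_le_div_iff₀ (by positivity) (pow_pos hR m)]
    linarith [h1]
  -- power series of f at radius R'
  set R' : ℝ := (r + R)/2 with hR'def
  have hrR' : r < R' := by rw [hR'def]; linarith
  have hR'R : R' < R := by rw [hR'def]; linarith
  have hR'0 : 0 < R' := by rw [hR'def]; linarith
  have hd : DifferentiableOn ℂ f (closedBall 0 R') := hf.mono (closedBall_subset_ball hR'R)
  set R'n : NNReal := ⟨R', hR'0.le⟩ with hR'n
  have hpb : HasFPowerSeriesOnBall f (cauchyPowerSeries f 0 R') 0 (R'n : ENNReal) :=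
    DifferentiableOn.hasFPowerSeriesOnBall (R := R'n) hd (by exact_mod_cast hR'0)
  have hpcoeff : ∀ m, (cauchyPowerSeries f 0 R').coeff m = cα m := by
    intro m
    have h1 := hpb.factorial_smul (1:ℂ) m
    have h2 : iteratedDeriv m f 0 = (m.factorial : ℂ) * (cauchyPowerSeries f 0 R').coeff m := by
      rw [iteratedDeriv_eq_iteratedFDeriv, ← h1, FormalMultilinearSeries.coeff, nsmul_eq_mul]
      rfl
    rw [hcα]
    dsimp only
    rw [h2, ← mul_assoc, inv_mul_cancel₀ (by exact_mod_cast m.factorial_ne_zero), one_mul]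
  obtain ⟨q, hq, hco⟩ := iterated_series hpb n
  -- the series for the n-th derivative, evaluated at z
  have hzmem : z ∈ Metric.eball (0:ℂ) (R'n : ENNReal) := by
    rw [Metric.emetric_ball_nnreal, mem_ball_zero_iff, hz]
    exact hrR'
  have hsum0 := hq.hasSum hzmem
  rw [zero_add] at hsum0
  set F : ℕ → ℂ := fun m => (((n+m).factorial : ℂ) / (m.factorial : ℂ)) * cα (n+m) * z ^ m with hF
  have hFeq : (fun m => q m fun _ => z) = F := by
    funext m
    rw [q.apply_eq_pow_smul_coeff, hco m, hpcoeff, hF, smul_eq_mul]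
    ring
  rw [hFeq] at hsum0
  have hF0 : F 0 = iteratedDeriv n f 0 := by
    rw [hF]
    dsimp only
    rw [pow_zero, mul_one, Nat.add_zero, hcα]
    dsimp only
    rw [Nat.factorial_zero, Nat.cast_one, div_one, ← mul_assoc,
      mul_inv_cancel₀ (by exact_mod_cast n.factorial_ne_zero), one_mul]
  have hshift : HasSum (fun m => F (m + 1)) (iteratedDeriv n f z - iteratedDeriv n f 0) := by
    have h1 := (hasSum_nat_add_iff' 1).mpr hsum0
    simpa [Finset.sum_range_one, hF0] using h1
  -- the geometric majorant
  set x : ℝ := r / R with hx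
  have hx0 : 0 ≤ x := div_nonneg hr hR.le
  have hx1 : x < 1 := by rw [hx, div_lt_one hR]; exact h3
  have hxn : ‖x‖ < 1 := by rw [Real.norm_eq_abs, _root_.abs_of_nonneg hx0]; exact hx1
  have hgeom := hasSum_choose_mul_geometric_of_norm_lt_one n hxn
  have hgeom1 : HasSum (fun m => (((m+1+n).choose n : ℝ)) * x ^ (m+1))
      (1 / (1-x)^(n+1) - 1) := by
    have h1 := (hasSum_nat_add_iff' 1).mpr hgeom
    simpa using h1
  set C : ℝ := 2*(M - ‖f 0‖) * (n.factorial : ℝ) / R ^ n with hC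
  have hgeom2 := hgeom1.mul_left C
  -- termwise bound
  have hbound : ∀ m : ℕ, ‖F (m+1)‖ ≤ C * ((((m+1+n).choose n : ℝ)) * x ^ (m+1)) := by
    intro m
    have hm : n + (m+1) ≠ 0 := by omega
    have hα := hαb (n + (m+1)) hm
    have hnorm : ‖F (m+1)‖ = ((n+(m+1)).factorial : ℝ) / (((m+1).factorial : ℝ)) * ‖cα (n+(m+1))‖ * r ^ (m+1) := by
      rw [hF]
      dsimp only
      rw [norm_mul, norm_mul, norm_div, Complex.norm_natCast, Complex.norm_natCast, norm_pow, hz]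
    rw [hnorm]
    have hch : (((n+(m+1)).choose n : ℝ)) * ((n.factorial : ℝ) * (((m+1).factorial : ℝ))) = ((n+(m+1)).factorial : ℝ) := by
      have h1 := Nat.choose_mul_factorial_mul_factorial (Nat.le_add_right n (m+1))
      rw [Nat.add_sub_cancel_left] at h1
      exact_mod_cast congrArg (Nat.cast : ℕ → ℝ) (by rw [← h1]; ring)
    have step1 : ((n+(m+1)).factorial : ℝ) / (((m+1).factorial : ℝ)) * ‖cα (n+(m+1))‖ * r ^ (m+1)
        ≤ ((n+(m+1)).factorial : ℝ) / (((m+1).factorial : ℝ)) * (2*(M - ‖f 0‖) / R ^ (n+(m+1))) * r ^ (m+1) := by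
      have hnn : (0:ℝ) ≤ ((n+(m+1)).factorial : ℝ) / (((m+1).factorial : ℝ)) := by positivity
      have hrp : (0:ℝ) ≤ r ^ (m+1) := pow_nonneg hr _
      exact mul_le_mul_of_nonneg_right (mul_le_mul_of_nonneg_left hα hnn) hrp
    refine step1.trans (le_of_eq ?_)
    have hmn : m + 1 + n = n + (m+1) := by omega
    have hBne : (((m+1).factorial : ℝ)) ≠ 0 := by positivity
    have e1 : ((n+(m+1)).factorial : ℝ) / (((m+1).factorial : ℝ))
        = (((n+(m+1)).choose n : ℝ)) * (n.factorial : ℝ) := by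
      rw [div_eq_iff hBne, ← hch]
      ring
    rw [e1, hC, hx, hmn, div_pow]
    have hRne : R ≠ 0 := hR.ne'
    field_simp
    ring
  -- summing up
  have hsumnorm : Summable (fun m => ‖F (m+1)‖) :=
    Summable.of_nonneg_of_le (fun m => norm_nonneg _) hbound hgeom2.summable
  have h20 : ‖iteratedDeriv n f z - iteratedDeriv n f 0‖ ≤ C * (1/(1-x)^(n+1) - 1) := by
    rw [← hshift.tsum_eq]
    calc ‖∑' m, F (m+1)‖ ≤ ∑' m, ‖F (m+1)‖ := norm_tsum_le_tsum_norm hsumnorm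
      _ ≤ ∑' m, C * ((((m+1+n).choose n : ℝ)) * x ^ (m+1)) :=
          Summable.tsum_le_tsum hbound hsumnorm hgeom2.summable
      _ = C * (1/(1-x)^(n+1) - 1) := hgeom2.tsum_eq
  refine h20.trans (le_of_eq ?_)
  rw [hC, hx]
  have hRr : (0:ℝ) < R - r := by linarith
  have h1 : (1 : ℝ) - r/R = (R - r)/R := by field_simp
  rw [h1, div_pow]
  have hRr' : (R - r) ≠ 0 := hRr.ne'
  have hRne : R ≠ 0 := hR.ne'
  field_simp
end
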